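/- arXiv:1005.2987 — 10 statements merged into one kernel-verified Lean document; each statement's English description precedes it below -/
import Mathlib

section
/- Let A and B be unital commutative complex Banach algebras and let φ : A → B be a spectral morphism. Then for every n ≥ 1 the induced morphism M_n(A) → M_n(B) on n×n matrix algebras (applying φ entrywise) is spectral, i.e. a matrix a ∈ M_n(A) is invertible in M_n(A) if and only if its image is invertible in M_n(B). -/
/-- Let `A` and `B` be unital commutative complex Banach algebras and `φ : A → B` a spectral
morphism. Then for every `n ≥ 1` the induced morphism `M_n(A) → M_n(B)` (applying `φ`
entrywise) is spectral: a matrix `M ∈ M_n(A)` is invertible iff its image is invertible. -/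
theorem matrix_spectral_of_spectral_comm {A B : Type*}
    [NormedCommRing A] [NormedAlgebra ℂ A] [CompleteSpace A]
    [NormedCommRing B] [NormedAlgebra ℂ B] [CompleteSpace B]
    (φ : A →ₐ[ℂ] B) (hcont : Continuous φ)
    (hspec : ∀ a : A, spectrum ℂ (φ a) = spectrum ℂ a) :
    ∀ n : ℕ, 1 ≤ n → ∀ M : Matrix (Fin n) (Fin n) A,
      IsUnit M ↔ IsUnit (M.map φ) := by
  intro n hn M
  have key : ∀ a : A, IsUnit a ↔ IsUnit (φ a) := by
    intro a
    rw [← spectrum.zero_notMem_iff ℂ, ← spectrum.zero_notMem_iff ℂ, hspec]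
  rw [Matrix.isUnit_iff_isUnit_det, Matrix.isUnit_iff_isUnit_det,
    show (M.map ⇑φ).det = φ M.det from (RingHom.map_det (φ : A →+* B) M).symm]
  exact key M.det
end

section
/- (Swan) Let A and B be unital complex Banach algebras and let φ : A → B be a dense and spectral morphism. Then for every n ≥ 1 the induced morphism M_n(A) → M_n(B) (applying φ entrywise) is a dense and spectral morphism. -/
open Matrix
open scoped NNReal

set_option maxHeartbeats 1000000

section BlockLemmas

variable {m n α : Type*} [Fintype m] [Fintype n] [DecidableEq m] [DecidableEq n] [Ring α]

private theorem swan_isUnit_diag_iff (S : Matrix m m α) (D : Matrix n n α)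
    (Du : Matrix n n α) (h1 : D * Du = 1) (h2 : Du * D = 1) :
    IsUnit (fromBlocks S 0 0 D) ↔ IsUnit S := by
  constructor
  · rintro ⟨u, hu⟩
    have hmul1 : fromBlocks S 0 0 D * u.inv = 1 := by rw [← hu]; exact u.val_inv
    have hmul2 : u.inv * fromBlocks S 0 0 D = 1 := by rw [← hu]; exact u.inv_val
    rw [← fromBlocks_toBlocks u.inv, fromBlocks_multiply, ← fromBlocks_one,
      fromBlocks_inj] at hmul1 hmul2
    have e1 : S * (u.inv).toBlocks₁₁ = 1 := by
      have h := hmul1.1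
      rwa [Matrix.zero_mul, add_zero] at h
    have e2 : (u.inv).toBlocks₁₁ * S = 1 := by
      have h := hmul2.1
      rwa [Matrix.mul_zero, add_zero] at h
    exact ⟨⟨S, (u.inv).toBlocks₁₁, e1, e2⟩, rfl⟩
  · rintro ⟨v, hv⟩
    refine ⟨⟨fromBlocks S 0 0 D, fromBlocks v.inv 0 0 Du, ?_, ?_⟩, rfl⟩
    · have hs : S * v.inv = 1 := by rw [← hv]; exact v.val_inv
      simp only [fromBlocks_multiply, Matrix.mul_zero, Matrix.zero_mul, add_zero, zero_add,
        h1, hs]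
      exact fromBlocks_one
    · have hs : v.inv * S = 1 := by rw [← hv]; exact v.inv_val
      simp only [fromBlocks_multiply, Matrix.mul_zero, Matrix.zero_mul, add_zero, zero_add,
        h2, hs]
      exact fromBlocks_one

/-- Schur complement criterion with invertible bottom-right corner, over a
noncommutative ring. -/
private theorem swan_isUnit_fromBlocks_iff (P : Matrix m m α) (Bm : Matrix m n α)
    (C : Matrix n m α) (D : Matrix n n α) (Du : Matrix n n α)
    (h1 : D * Du = 1) (h2 : Du * D = 1) :
    IsUnit (fromBlocks P Bm C D) ↔ IsUnit (P - Bm * Du * C) := by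
  set S := P - Bm * Du * C with hS
  have hL : IsUnit (fromBlocks (1 : Matrix m m α) (Bm * Du) 0 (1 : Matrix n n α)) := by
    refine ⟨⟨fromBlocks 1 (Bm * Du) 0 1, fromBlocks 1 (-(Bm * Du)) 0 1, ?_, ?_⟩, rfl⟩ <;>
    · simp only [fromBlocks_multiply, Matrix.mul_one, Matrix.one_mul, Matrix.mul_zero,
        Matrix.zero_mul, add_zero, zero_add, neg_add_cancel, add_neg_cancel]
      exact fromBlocks_one
  have hR : IsUnit (fromBlocks (1 : Matrix m m α) 0 (Du * C) (1 : Matrix n n α)) := by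
    refine ⟨⟨fromBlocks 1 0 (Du * C) 1, fromBlocks 1 0 (-(Du * C)) 1, ?_, ?_⟩, rfl⟩ <;>
    · simp only [fromBlocks_multiply, Matrix.mul_one, Matrix.one_mul, Matrix.mul_zero,
        Matrix.zero_mul, add_zero, zero_add, neg_add_cancel, add_neg_cancel]
      exact fromBlocks_one
  have e1 : Bm * Du * D = Bm := by rw [Matrix.mul_assoc, h2, Matrix.mul_one]
  have e2 : D * (Du * C) = C := by rw [← Matrix.mul_assoc, h1, Matrix.one_mul]
  have hfact : fromBlocks P Bm C D =
      fromBlocks 1 (Bm * Du) 0 1 * fromBlocks S 0 0 D * fromBlocks 1 0 (Du * C) 1 := by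
    simp only [fromBlocks_multiply, Matrix.mul_one, Matrix.one_mul, Matrix.mul_zero,
      Matrix.zero_mul, add_zero, zero_add, e1, e2, hS]
    rw [fromBlocks_inj]
    refine ⟨?_, rfl, rfl, rfl⟩
    rw [← Matrix.mul_assoc]
    abel
  obtain ⟨uL, huL⟩ := hL
  obtain ⟨uR, huR⟩ := hR
  rw [hfact, ← huL, ← huR, Units.isUnit_mul_units, Units.isUnit_units_mul]
  exact swan_isUnit_diag_iff S D Du h1 h2

private theorem swan_isUnit_submatrix_of {k l : Type*} [Fintype k] [Fintype l]
    [DecidableEq k] [DecidableEq l] (f : k ≃ l) (M : Matrix l l α) (hM : IsUnit M) :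
    IsUnit (M.submatrix f f) := by
  obtain ⟨u, hu⟩ := hM
  refine ⟨⟨M.submatrix f f, u.inv.submatrix f f, ?_, ?_⟩, rfl⟩
  · rw [← hu, Matrix.submatrix_mul_equiv, u.val_inv, Matrix.submatrix_one_equiv]
  · rw [← hu, Matrix.submatrix_mul_equiv, u.inv_val, Matrix.submatrix_one_equiv]

private theorem swan_isUnit_submatrix_iff {k l : Type*} [Fintype k] [Fintype l]
    [DecidableEq k] [DecidableEq l] (f : k ≃ l) (M : Matrix l l α) :
    IsUnit (M.submatrix f f) ↔ IsUnit M := by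
  constructor
  · intro h
    have h2 := swan_isUnit_submatrix_of f.symm (M.submatrix f f) h
    simpa [Matrix.submatrix_submatrix] using h2
  · exact swan_isUnit_submatrix_of f M

end BlockLemmas

section Swan

variable {A B : Type*}
    [NormedRing A] [NormedAlgebra ℂ A] [CompleteSpace A]
    [NormedRing B] [NormedAlgebra ℂ B] [CompleteSpace B]

attribute [local instance] Matrix.linftyOpNormedRing Matrix.linftyOpNormedAlgebra

private instance swanMatrixComplete {k : Type*} [Fintype k] [DecidableEq k] :
    CompleteSpace (Matrix k k B) :=
  inferInstanceAs (CompleteSpace (k → k → B))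

private theorem swan_entry_le {k : Type*} [Fintype k] [DecidableEq k]
    (M : Matrix k k B) (i j : k) : ‖M i j‖ ≤ ‖M‖ := by
  have h : ‖M i j‖₊ ≤ ‖M‖₊ := by
    rw [Matrix.linfty_opNNNorm_def]
    refine le_trans ?_ (Finset.le_sup (f := fun i => ∑ j, ‖M i j‖₊) (Finset.mem_univ i))
    exact Finset.single_le_sum (f := fun j => ‖M i j‖₊) (fun _ _ => zero_le)
      (Finset.mem_univ j)
  exact_mod_cast h

private theorem swan_norm_le_sum {k : Type*} [Fintype k] [DecidableEq k]
    (M : Matrix k k B) : ‖M‖ ≤ ∑ i, ∑ j, ‖M i j‖ := by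
  have h : ‖M‖₊ ≤ ∑ i, ∑ j, ‖M i j‖₊ := by
    rw [Matrix.linfty_opNNNorm_def]
    exact Finset.sup_le fun i _ =>
      Finset.single_le_sum (f := fun i => ∑ j, ‖M i j‖₊) (fun _ _ => zero_le)
        (Finset.mem_univ i)
  calc ‖M‖ = ((‖M‖₊ : ℝ≥0) : ℝ) := rfl
    _ ≤ ((∑ i, ∑ j, ‖M i j‖₊ : ℝ≥0) : ℝ) := by exact_mod_cast h
    _ = ∑ i, ∑ j, ‖M i j‖ := by push_cast; rfl

private theorem swan_approx (φ : A →ₐ[ℂ] B) (hdense : DenseRange φ)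
    {k : ℕ} (W : Matrix (Fin k) (Fin k) B) {ε : ℝ} (hε : 0 < ε) :
    ∃ Y : Matrix (Fin k) (Fin k) A, ‖Y.map φ - W‖ < ε := by
  set δ : ℝ := ε / (k * k + 1) with hδdef
  have hδ : 0 < δ := by positivity
  have hch : ∀ i j : Fin k, ∃ a : A, dist (W i j) (φ a) < δ := fun i j =>
    Metric.denseRange_iff.mp hdense (W i j) δ hδ
  choose g hg using hch
  refine ⟨Matrix.of g, lt_of_le_of_lt (swan_norm_le_sum _) ?_⟩
  have hentry : ∀ i j : Fin k, ‖((Matrix.of g).map φ - W) i j‖ < δ := by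
    intro i j
    have h : ((Matrix.of g).map φ - W) i j = φ (g i j) - W i j := by
      simp [Matrix.sub_apply, Matrix.map_apply]
    rw [h, ← dist_eq_norm, dist_comm]
    exact hg i j
  have hsum : (∑ i, ∑ j, ‖((Matrix.of g).map φ - W) i j‖) ≤ (k : ℝ) * ((k : ℝ) * δ) := by
    calc (∑ i, ∑ j, ‖((Matrix.of g).map φ - W) i j‖)
        ≤ ∑ _i : Fin k, ((k : ℝ) * δ) := by
          refine Finset.sum_le_sum fun i _ => ?_
          calc (∑ j, ‖((Matrix.of g).map φ - W) i j‖) ≤ ∑ _j : Fin k, δ :=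
                Finset.sum_le_sum fun j _ => (hentry i j).le
            _ = (k : ℝ) * δ := by simp [mul_comm]
      _ = (k : ℝ) * ((k : ℝ) * δ) := by simp [mul_comm]
  refine lt_of_le_of_lt hsum ?_
  have hk : (0 : ℝ) ≤ (k : ℝ) := Nat.cast_nonneg k
  have hε' : ((k : ℝ) * k + 1) * δ = ε := by
    rw [hδdef]; field_simp
  nlinarith [hδ]

private theorem swan_map_mul {k l o : Type*} [Fintype l] (φ : A →ₐ[ℂ] B)
    (M : Matrix k l A) (N : Matrix l o A) :
    (M * N).map ⇑φ = M.map ⇑φ * N.map ⇑φ := by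
  ext i j
  simp [Matrix.mul_apply, Matrix.map_apply, map_sum]

private theorem swan_core (φ : A →ₐ[ℂ] B) (hdense : DenseRange φ)
    (hspec : ∀ a : A, spectrum ℂ (φ a) = spectrum ℂ a) :
    ∀ n : ℕ, ∀ M : Matrix (Fin n) (Fin n) A, IsUnit (M.map φ) → IsUnit M := by
  intro n
  induction n with
  | zero =>
    intro M _
    have h : M = 1 := by ext i j; exact i.elim0
    rw [h]; exact isUnit_one
  | succ n IH =>
    -- The key step: matrices whose image is close to 1 are invertible.
    have key : ∀ z : Matrix (Fin (n + 1)) (Fin (n + 1)) A,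
        ‖(1 : Matrix (Fin (n + 1)) (Fin (n + 1)) B) - z.map φ‖ < 1 → IsUnit z := by
      intro z hz
      have hzφ : IsUnit (z.map φ) := by
        haveI : HasSummableGeomSeries (Matrix (Fin (n + 1)) (Fin (n + 1)) B) :=
          @instHasSummableGeomSeriesOfCompleteSpace _ _ swanMatrixComplete
        have h := isUnit_one_sub_of_norm_lt_one hz
        rwa [sub_sub_cancel] at h
      set e : Fin n ⊕ Fin 1 ≃ Fin (n + 1) := finSumFinEquiv with he
      set z' := z.submatrix e e with hz'
      set P := z'.toBlocks₁₁ with hP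
      set Bm := z'.toBlocks₁₂ with hBm
      set C := z'.toBlocks₂₁ with hC
      set D := z'.toBlocks₂₂ with hD
      have hblocks : z' = fromBlocks P Bm C D := (fromBlocks_toBlocks z').symm
      set i0 : Fin (n + 1) := e (Sum.inr 0) with hi0
      set p : A := z i0 i0 with hp
      -- the corner entry is invertible
      have hφp : IsUnit (φ p) := by
        have h1 : ((1 : Matrix (Fin (n + 1)) (Fin (n + 1)) B) - z.map φ) i0 i0 = 1 - φ p := by
          simp [Matrix.sub_apply, Matrix.map_apply, Matrix.one_apply_eq, hp]
        have h2 : ‖(1 : B) - φ p‖ < 1 := by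
          rw [← h1]
          exact lt_of_le_of_lt (swan_entry_le _ i0 i0) hz
        have h3 := isUnit_one_sub_of_norm_lt_one h2
        rwa [sub_sub_cancel] at h3
      have hpu : IsUnit p := by
        have h0 : (0 : ℂ) ∉ spectrum ℂ (φ p) := (spectrum.zero_notMem_iff ℂ).mpr hφp
        rw [hspec p] at h0
        exact (spectrum.zero_notMem_iff ℂ).mp h0
      -- the 1×1 corner block
      have hDval : ∀ i j : Fin 1, D i j = p := by
        intro i j
        have hi : i = 0 := Subsingleton.elim _ _
        have hj : j = 0 := Subsingleton.elim _ _
        subst hi; subst hj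
        simp [hD, Matrix.toBlocks₂₂, hz', Matrix.submatrix_apply, hp, hi0]
      set Du : Matrix (Fin 1) (Fin 1) A := Matrix.of fun _ _ => (↑hpu.unit⁻¹ : A) with hDu
      have hpmul1 : p * (↑hpu.unit⁻¹ : A) = 1 := hpu.mul_val_inv
      have hpmul2 : (↑hpu.unit⁻¹ : A) * p = 1 := hpu.val_inv_mul
      have hD1 : D * Du = 1 := by
        ext i j
        have hij : i = j := Subsingleton.elim i j
        subst hij
        rw [Matrix.mul_apply, Fin.sum_univ_one, Matrix.one_apply_eq, hDval]
        exact hpmul1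
      have hD2 : Du * D = 1 := by
        ext i j
        have hij : i = j := Subsingleton.elim i j
        subst hij
        rw [Matrix.mul_apply, Fin.sum_univ_one, Matrix.one_apply_eq, hDval]
        exact hpmul2
      -- the image matrix in block form is invertible
      have hz'φ : IsUnit (z'.map φ) := by
        rw [hz', ← Matrix.submatrix_map]
        exact (swan_isUnit_submatrix_iff e (z.map φ)).mpr hzφ
      have hmapblocks : z'.map φ =
          fromBlocks (P.map φ) (Bm.map φ) (C.map φ) (D.map φ) := by
        rw [hblocks, Matrix.fromBlocks_map]
      have hφD1 : D.map φ * Du.map φ = 1 := by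
        rw [← swan_map_mul φ, hD1, Matrix.map_one _ (map_zero φ) (map_one φ)]
      have hφD2 : Du.map φ * D.map φ = 1 := by
        rw [← swan_map_mul φ, hD2, Matrix.map_one _ (map_zero φ) (map_one φ)]
      have hSφ : IsUnit ((P - Bm * Du * C).map φ) := by
        have h := (swan_isUnit_fromBlocks_iff (P.map φ) (Bm.map φ) (C.map φ) (D.map φ)
          (Du.map φ) hφD1 hφD2).mp (hmapblocks ▸ hz'φ)
        have hrw : (P - Bm * Du * C).map φ =
            P.map φ - Bm.map φ * Du.map φ * C.map φ := by
          rw [Matrix.map_sub _ (map_sub φ), swan_map_mul φ,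
            swan_map_mul φ]
        rwa [hrw]
      have hS : IsUnit (P - Bm * Du * C) := IH _ hSφ
      have hz'unit : IsUnit z' := by
        rw [hblocks]
        exact (swan_isUnit_fromBlocks_iff P Bm C D Du hD1 hD2).mpr hS
      rw [hz'] at hz'unit
      exact (swan_isUnit_submatrix_iff e z).mp hz'unit
    -- produce one-sided inverses using density, then conclude
    intro M hM
    obtain ⟨w, hw⟩ := hM
    set c : ℝ := ‖M.map φ‖ with hc
    have hc0 : 0 ≤ c := norm_nonneg _
    have hε : (0 : ℝ) < 1 / (c + 1) := by positivity
    obtain ⟨y, hy⟩ := swan_approx φ hdense w.inv hε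
    obtain ⟨y', hy'⟩ := swan_approx φ hdense w.inv hε
    have hxy : IsUnit (M * y) := by
      apply key
      have heq : (1 : Matrix (Fin (n + 1)) (Fin (n + 1)) B) - (M * y).map φ =
          M.map φ * (w.inv - y.map φ) := by
        rw [swan_map_mul φ, Matrix.mul_sub]
        have h : M.map φ * w.inv = 1 := by rw [← hw]; exact w.val_inv
        rw [h]
      rw [heq]
      have h1 : ‖M.map φ * (w.inv - y.map φ)‖ ≤ c * ‖w.inv - y.map φ‖ := norm_mul_le _ _
      have h2 : ‖w.inv - y.map φ‖ < 1 / (c + 1) := by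
        rw [← norm_sub_rev]; exact hy
      have h3 : (0 : ℝ) ≤ ‖w.inv - y.map φ‖ := norm_nonneg _
      calc ‖M.map φ * (w.inv - y.map φ)‖ ≤ c * ‖w.inv - y.map φ‖ := h1
        _ < 1 := by
          rw [lt_div_iff₀ (by positivity : (0:ℝ) < c + 1)] at h2
          nlinarith
    have hyx : IsUnit (y' * M) := by
      apply key
      have heq : (1 : Matrix (Fin (n + 1)) (Fin (n + 1)) B) - (y' * M).map φ =
          (w.inv - y'.map φ) * M.map φ := by
        rw [swan_map_mul φ, Matrix.sub_mul]
        have h : w.inv * M.map φ = 1 := by rw [← hw]; exact w.inv_val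
        rw [h]
      rw [heq]
      have h1 : ‖(w.inv - y'.map φ) * M.map φ‖ ≤ ‖w.inv - y'.map φ‖ * c := norm_mul_le _ _
      have h2 : ‖w.inv - y'.map φ‖ < 1 / (c + 1) := by
        rw [← norm_sub_rev]; exact hy'
      have h3 : (0 : ℝ) ≤ ‖w.inv - y'.map φ‖ := norm_nonneg _
      calc ‖(w.inv - y'.map φ) * M.map φ‖ ≤ ‖w.inv - y'.map φ‖ * c := h1
        _ < 1 := by
          rw [lt_div_iff₀ (by positivity : (0:ℝ) < c + 1)] at h2
          nlinarith
    obtain ⟨u, hu⟩ := hxy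
    obtain ⟨v, hv⟩ := hyx
    have hr : M * (y * u.inv) = 1 := by
      rw [← Matrix.mul_assoc, ← hu]; exact u.val_inv
    have hl : (v.inv * y') * M = 1 := by
      rw [Matrix.mul_assoc, ← hv]; exact v.inv_val
    have heq2 : v.inv * y' = y * u.inv := by
      calc v.inv * y' = v.inv * y' * (M * (y * u.inv)) := by rw [hr, Matrix.mul_one]
        _ = (v.inv * y' * M) * (y * u.inv) := by simp only [Matrix.mul_assoc]
        _ = y * u.inv := by rw [hl, Matrix.one_mul]
    exact ⟨⟨M, y * u.inv, hr, by rw [← heq2]; exact hl⟩, rfl⟩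

end Swan

/-- (Swan) If `φ : A → B` is a dense and spectral morphism of unital complex Banach algebras,
then for every `n ≥ 1` the induced morphism `M_n(A) → M_n(B)` (applying `φ` entrywise) is a
dense and spectral morphism. -/
theorem matrix_dense_spectral_of_dense_spectral {A B : Type*}
    [NormedRing A] [NormedAlgebra ℂ A] [CompleteSpace A]
    [NormedRing B] [NormedAlgebra ℂ B] [CompleteSpace B]
    (φ : A →ₐ[ℂ] B) (hcont : Continuous φ) (hdense : DenseRange φ)
    (hspec : ∀ a : A, spectrum ℂ (φ a) = spectrum ℂ a) :
    ∀ n : ℕ, 1 ≤ n →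
      DenseRange (fun M : Matrix (Fin n) (Fin n) A => M.map φ) ∧
      ∀ M : Matrix (Fin n) (Fin n) A, spectrum ℂ (M.map φ) = spectrum ℂ M := by
  intro n _hn
  constructor
  · -- density
    have hsub : (Set.univ.pi fun _ : Fin n => Set.univ.pi fun _ : Fin n => Set.range ⇑φ) ⊆
        Set.range (fun M : Matrix (Fin n) (Fin n) A => M.map φ) := by
      intro N hN
      have h' : ∀ i j : Fin n, ∃ a : A, φ a = N i j := by
        intro i j
        exact hN i (Set.mem_univ i) j (Set.mem_univ j)
      choose g hg using h'
      refine ⟨Matrix.of g, ?_⟩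
      ext i j
      exact hg i j
    exact Dense.mono hsub
      (dense_pi Set.univ fun i _ => dense_pi Set.univ fun j _ => hdense)
  · intro M
    ext z
    rw [spectrum.mem_iff, spectrum.mem_iff, not_iff_not]
    have hmap : (algebraMap ℂ (Matrix (Fin n) (Fin n) A) z - M).map φ =
        algebraMap ℂ (Matrix (Fin n) (Fin n) B) z - M.map φ := by
      have h1 := map_sub (AlgHom.mapMatrix (m := Fin n) φ)
        (algebraMap ℂ (Matrix (Fin n) (Fin n) A) z) M
      have h2 := (AlgHom.mapMatrix (m := Fin n) φ).commutes z
      simp only [AlgHom.mapMatrix_apply] at h1 h2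
      rw [h1, h2]
    rw [← hmap]
    constructor
    · exact fun h => swan_core φ hdense hspec n _ h
    · intro h
      have h2 := h.map (AlgHom.mapMatrix (m := Fin n) φ)
      simpa only [AlgHom.mapMatrix_apply] using h2
end

section
/- Let Ω ⊆ ℂ be an open set containing 0, and for a unital complex Banach algebra A let A_Ω = {a ∈ A : sp_A(a) ⊆ Ω} with the subspace topology. If φ : A → B is a dense and spectral morphism of unital complex Banach algebras, then φ maps A_Ω into B_Ω and the induced map on path components [A_Ω] → [B_Ω] is a bijection. -/
open Metric Set

/-- The set of elements with spectrum contained in a fixed open set is open. -/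
lemma isOpen_setOf_spectrum_subset {B : Type*} [NormedRing B] [NormedAlgebra ℂ B]
    [CompleteSpace B] {Ω : Set ℂ} (hΩ : IsOpen Ω) :
    IsOpen {b : B | spectrum ℂ b ⊆ Ω} := by
  rcases subsingleton_or_nontrivial B with hB | hB
  · have h : {b : B | spectrum ℂ b ⊆ Ω} = univ :=
      eq_univ_of_forall fun b z hz =>
        absurd (isUnit_of_subsingleton _) (spectrum.mem_iff.mp hz)
    rw [h]; exact isOpen_univ
  rw [Metric.isOpen_iff]
  intro b hb
  set K : Set ℂ := Ωᶜ ∩ closedBall (0 : ℂ) ((‖b‖ + 1) * ‖(1 : B)‖) with hK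
  have hKρ : K ⊆ resolventSet ℂ b := fun z hz => by
    by_contra h
    exact hz.1 (hb h)
  have hKc : IsCompact K := (isCompact_closedBall _ _).inter_left hΩ.isClosed_compl
  have hcont : ContinuousOn (resolvent b) K := fun z hz =>
    (spectrum.hasDerivAt_resolvent (hKρ hz)).continuousAt.continuousWithinAt
  obtain ⟨M, hM⟩ := hKc.exists_bound_of_continuousOn hcont
  have hM1 : (0:ℝ) < max M 1 := lt_of_lt_of_le one_pos (le_max_right _ _)
  refine ⟨min (max M 1)⁻¹ 1, lt_min (inv_pos.mpr hM1) one_pos, fun b' hb' => ?_⟩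
  rw [mem_ball, dist_eq_norm] at hb'
  intro z hz
  by_contra hzΩ
  have hzK : z ∈ K := by
    refine ⟨hzΩ, ?_⟩
    rw [mem_closedBall, dist_zero_right]
    have h1 : ‖z‖ ≤ ‖b'‖ * ‖(1:B)‖ := spectrum.norm_le_norm_mul_of_mem hz
    have h2 : ‖b'‖ ≤ ‖b‖ + 1 := by
      have h3 := norm_sub_norm_le b' b
      have hlt : ‖b' - b‖ < 1 := lt_of_lt_of_le hb' (min_le_right _ _)
      linarith
    have h4 := mul_le_mul_of_nonneg_right h2 (norm_nonneg (1:B))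
    linarith
  have hu : IsUnit (algebraMap ℂ B z - b) := hKρ hzK
  have hinv : ‖((hu.unit⁻¹ : Bˣ) : B)‖ ≤ max M 1 := by
    have h := hM z hzK
    rw [resolvent, ← hu.unit_spec, Ring.inverse_unit] at h
    exact h.trans (le_max_left _ _)
  have hpos : (0:ℝ) < ‖((hu.unit⁻¹ : Bˣ) : B)‖ := Units.norm_pos _
  have hnear : ‖(algebraMap ℂ B z - b') - ↑hu.unit‖ < ‖((hu.unit⁻¹ : Bˣ) : B)‖⁻¹ := by
    rw [hu.unit_spec]
    have heq : (algebraMap ℂ B z - b') - (algebraMap ℂ B z - b) = -(b' - b) := by abel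
    rw [heq, norm_neg]
    calc ‖b' - b‖ < min (max M 1)⁻¹ 1 := hb'
      _ ≤ (max M 1)⁻¹ := min_le_left _ _
      _ ≤ ‖((hu.unit⁻¹ : Bˣ) : B)‖⁻¹ := by gcongr
  exact (spectrum.mem_iff.mp hz) (Units.ofNearby hu.unit _ hnear).isUnit

/-- A path in an open set between images of a dense morphism can be lifted, up to homotopy
(in fact up to path components), to the preimage. -/
lemma joinedIn_preimage_of_denseRange {A B : Type*} [NormedRing A] [NormedAlgebra ℂ A]
    [NormedRing B] [NormedAlgebra ℂ B]
    (φ : A →ₐ[ℂ] B) (hdense : DenseRange φ) {U : Set B} (hU : IsOpen U)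
    {a₀ a₁ : A} (h₀ : a₀ ∈ φ ⁻¹' U) (h₁ : a₁ ∈ φ ⁻¹' U)
    (hJ : JoinedIn U (φ a₀) (φ a₁)) : JoinedIn (φ ⁻¹' U) a₀ a₁ := by
  obtain ⟨p, hp⟩ := hJ
  have hrange : range p ⊆ U := by rintro _ ⟨t, rfl⟩; exact hp t
  obtain ⟨δ, hδ, hth⟩ := (isCompact_range p.continuous).exists_thickening_subset_open hU hrange
  have hc : UniformContinuousOn p.extend (Icc (0:ℝ) 1) :=
    (isCompact_Icc).uniformContinuousOn_of_continuous p.continuous_extend.continuousOn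
  rw [Metric.uniformContinuousOn_iff] at hc
  obtain ⟨η, hη, hmod⟩ := hc (δ/3) (by linarith)
  obtain ⟨n, hn⟩ := exists_nat_one_div_lt (K := ℝ) hη
  have hmem : ∀ t : ℝ, p.extend t ∈ range p := fun t => by
    rw [← Path.extend_range]; exact mem_range_self t
  -- joining two good approximants via a segment through a ball
  have seg : ∀ c ∈ range p, ∀ a a' : A, ‖φ a - c‖ < δ → ‖φ a' - c‖ < δ →
      JoinedIn (φ ⁻¹' U) a a' := by
    intro c hc' a a' ha ha'
    have hball : ball c δ ⊆ U := (ball_subset_thickening hc' δ).trans hth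
    have hconv : Convex ℝ (φ ⁻¹' ball c δ) :=
      (convex_ball c δ).linear_preimage (φ.toLinearMap.restrictScalars ℝ)
    have hmema : a ∈ φ ⁻¹' ball c δ := by simpa [mem_ball, dist_eq_norm] using ha
    have hmema' : a' ∈ φ ⁻¹' ball c δ := by simpa [mem_ball, dist_eq_norm] using ha'
    exact ((hconv.isPathConnected ⟨a, hmema⟩).joinedIn a hmema a' hmema').mono
      (preimage_mono hball)
  have hIcc : ∀ i : ℕ, i ≤ n + 1 → (i : ℝ)/(n+1) ∈ Icc (0:ℝ) 1 := fun i hi =>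
    ⟨by positivity, by rw [div_le_one (by positivity)]; exact_mod_cast hi⟩
  have key : ∀ i : ℕ, i ≤ n + 1 → ∃ a : A,
      ‖φ a - p.extend ((i : ℝ) / (n+1))‖ < δ/3 ∧ JoinedIn (φ ⁻¹' U) a₀ a := by
    intro i hi
    induction i with
    | zero =>
        refine ⟨a₀, ?_, JoinedIn.refl h₀⟩
        have h0 : ((0:ℕ):ℝ) / (n+1) = 0 := by simp
        rw [h0, Path.extend_zero]
        simp only [sub_self, norm_zero]
        positivity
    | succ i ih =>
        have hi' : i ≤ n + 1 := le_trans (Nat.le_succ i) hi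
        obtain ⟨a, ha, hja⟩ := ih hi'
        obtain ⟨a', ha'⟩ := hdense.exists_dist_lt (p.extend (((i:ℝ)+1) / (n+1)))
          (show (0:ℝ) < δ/3 by linarith)
        rw [dist_comm, dist_eq_norm] at ha'
        have hstep : dist (p.extend (((i:ℝ)+1)/(n+1))) (p.extend ((i:ℝ)/(n+1))) < δ/3 := by
          apply hmod _ (by exact_mod_cast hIcc (i+1) hi) _ (hIcc i hi')
          have : ((i:ℝ)+1)/(n+1) - (i:ℝ)/(n+1) = 1/(n+1) := by
            field_simp
            ring
          rw [Real.dist_eq, this]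
          rw [abs_of_pos (by positivity)]
          exact hn
        rw [dist_eq_norm] at hstep
        refine ⟨a', by exact_mod_cast ha', hja.trans ?_⟩
        apply seg (p.extend ((i:ℝ)/(n+1))) (hmem _) a a'
        · linarith
        · calc ‖φ a' - p.extend ((i:ℝ)/(n+1))‖
              ≤ ‖φ a' - p.extend (((i:ℝ)+1)/(n+1))‖
                + ‖p.extend (((i:ℝ)+1)/(n+1)) - p.extend ((i:ℝ)/(n+1))‖ := by
                have := norm_sub_le_norm_sub_add_norm_sub (φ a')
                  (p.extend (((i:ℝ)+1)/(n+1))) (p.extend ((i:ℝ)/(n+1)))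
                exact this
            _ < δ/3 + δ/3 := by exact add_lt_add ha' hstep
            _ < δ := by linarith
  obtain ⟨a, ha, hja⟩ := key (n+1) le_rfl
  have hone : (((n+1:ℕ)):ℝ) / (n+1) = 1 := by
    push_cast
    field_simp
  rw [hone, Path.extend_one] at ha
  have hc1 : φ a₁ ∈ range p := ⟨1, p.target⟩
  refine hja.trans (seg (φ a₁) hc1 a a₁ (by linarith) ?_)
  simp only [sub_self, norm_zero]
  positivity

/-- The map induced on path components by a continuous map. -/
def pi0Map {X Y : Type*} [TopologicalSpace X] [TopologicalSpace Y] {f : X → Y}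
    (hf : Continuous f) : ZerothHomotopy X → ZerothHomotopy Y :=
  Quotient.map f (fun _ _ h => Nonempty.map (fun p => p.map hf) h)

/-- The map `A_Ω → B_Ω` induced by a spectral morphism `φ`. -/
def specSetMap {A B : Type*} [NormedRing A] [NormedAlgebra ℂ A] [CompleteSpace A]
    [NormedRing B] [NormedAlgebra ℂ B] [CompleteSpace B] (Ω : Set ℂ) (φ : A →ₐ[ℂ] B)
    (hspec : ∀ a : A, spectrum ℂ (φ a) = spectrum ℂ a) :
    {a : A // spectrum ℂ a ⊆ Ω} → {b : B // spectrum ℂ b ⊆ Ω} :=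
  fun a => ⟨φ a.1, by rw [hspec]; exact a.2⟩

lemma continuous_specSetMap {A B : Type*} [NormedRing A] [NormedAlgebra ℂ A] [CompleteSpace A]
    [NormedRing B] [NormedAlgebra ℂ B] [CompleteSpace B] (Ω : Set ℂ) (φ : A →ₐ[ℂ] B)
    (hcont : Continuous φ) (hspec : ∀ a : A, spectrum ℂ (φ a) = spectrum ℂ a) :
    Continuous (specSetMap Ω φ hspec) :=
  (hcont.comp continuous_subtype_val).subtype_mk _

/-- If `Ω ⊆ ℂ` is open with `0 ∈ Ω` and `φ : A → B` is a dense and spectral morphism of unital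
complex Banach algebras, then `φ` maps `A_Ω = {a : spectrum a ⊆ Ω}` into `B_Ω`, and the
induced map on path components `[A_Ω] → [B_Ω]` is a bijection. -/
theorem pi0_specSet_bijective_of_dense_spectral {A B : Type*}
    [NormedRing A] [NormedAlgebra ℂ A] [CompleteSpace A]
    [NormedRing B] [NormedAlgebra ℂ B] [CompleteSpace B]
    (Ω : Set ℂ) (hΩ : IsOpen Ω) (h0 : (0 : ℂ) ∈ Ω)
    (φ : A →ₐ[ℂ] B) (hcont : Continuous φ) (hdense : DenseRange φ)
    (hspec : ∀ a : A, spectrum ℂ (φ a) = spectrum ℂ a) :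
    (∀ a : A, spectrum ℂ a ⊆ Ω → spectrum ℂ (φ a) ⊆ Ω) ∧
    Function.Bijective (pi0Map (continuous_specSetMap Ω φ hcont hspec)) := by
  have hUB : IsOpen {b : B | spectrum ℂ b ⊆ Ω} := isOpen_setOf_spectrum_subset hΩ
  refine ⟨fun a h => (hspec a).symm ▸ h, ?_, ?_⟩
  · -- injectivity
    intro x y
    refine Quotient.inductionOn₂ x y fun a₀ a₁ h => ?_
    apply Quotient.sound
    simp only [pi0Map, Quotient.map_mk] at h
    have hJB : Joined (specSetMap Ω φ hspec a₀) (specSetMap Ω φ hspec a₁) := Quotient.exact h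
    have m₀ : φ a₀.1 ∈ {b : B | spectrum ℂ b ⊆ Ω} := by
      rw [mem_setOf_eq, hspec]; exact a₀.2
    have m₁ : φ a₁.1 ∈ {b : B | spectrum ℂ b ⊆ Ω} := by
      rw [mem_setOf_eq, hspec]; exact a₁.2
    have hJ : JoinedIn {b : B | spectrum ℂ b ⊆ Ω} (φ a₀.1) (φ a₁.1) := by
      rw [joinedIn_iff_joined m₀ m₁]
      exact hJB
    have h₀ : a₀.1 ∈ φ ⁻¹' {b : B | spectrum ℂ b ⊆ Ω} := m₀
    have h₁ : a₁.1 ∈ φ ⁻¹' {b : B | spectrum ℂ b ⊆ Ω} := m₁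
    have hJA := joinedIn_preimage_of_denseRange φ hdense hUB h₀ h₁ hJ
    have hJA' : JoinedIn {a : A | spectrum ℂ a ⊆ Ω} a₀.1 a₁.1 := by
      refine hJA.mono fun x hx => ?_
      rw [mem_setOf_eq, ← hspec]
      exact hx
    exact hJA'.joined_subtype
  · -- surjectivity
    intro y
    refine Quotient.inductionOn y fun b => ?_
    obtain ⟨ε, hε, hball⟩ := Metric.isOpen_iff.mp hUB b.1 b.2
    obtain ⟨a, ha⟩ := hdense.exists_dist_lt b.1 hε
    have haU : φ a ∈ ball b.1 ε := by rwa [mem_ball, dist_comm]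
    have haA : spectrum ℂ a ⊆ Ω := by rw [← hspec]; exact hball haU
    refine ⟨Quotient.mk _ ⟨a, haA⟩, ?_⟩
    show Quotient.map _ _ _ = _
    change Quotient.mk _ (specSetMap Ω φ hspec ⟨a, haA⟩) = _
    apply Quotient.sound
    have hJ : JoinedIn {b' : B | spectrum ℂ b' ⊆ Ω} (φ a) b.1 :=
      (((convex_ball b.1 ε).isPathConnected ⟨_, haU⟩).joinedIn _ haU _ (mem_ball_self hε)).mono
        hball
    exact hJ.joined_subtype
end

section
/- (Bost) Let φ : A → B be a dense and spectral morphism of unital complex Banach algebras. Then for every n ≥ 1 the continuous map GL_n(A) → GL_n(B) induced by φ is a homotopy equivalence of topological spaces. -/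
noncomputable section

/-- `GL_n(A)`: the group of invertible `n × n` matrices over `A`, topologized as a
subspace of `M_n(A)`. -/
abbrev GLn (A : Type*) [Ring A] [TopologicalSpace A] (n : ℕ) : Type _ :=
  {M : Matrix (Fin n) (Fin n) A // IsUnit M}

/-- The map `GL_n(A) → GL_n(B)` induced by a ring morphism `A → B` (applied entrywise). -/
def glMap {A B : Type*} [Ring A] [Ring B] [TopologicalSpace A] [TopologicalSpace B]
    (φ : A →+* B) (n : ℕ) : GLn A n → GLn B n :=
  fun M => ⟨M.1.map φ, φ.mapMatrix.isUnit_map M.2⟩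

lemma continuous_glMap {A B : Type*} [Ring A] [Ring B] [TopologicalSpace A] [TopologicalSpace B]
    (φ : A →+* B) (n : ℕ) (hφ : Continuous φ) : Continuous (glMap φ n) :=
  (continuous_subtype_val.matrix_map hφ).subtype_mk _

section BostAux

open Matrix
set_option maxHeartbeats 1600000

variable {A B : Type*} [NormedRing A] [NormedAlgebra ℂ A] [CompleteSpace A]
    [NormedRing B] [NormedAlgebra ℂ B] [CompleteSpace B]

lemma bost_isUnit_fromBlocks {R : Type*} [Ring R] {m p : Type*} [Fintype m] [Fintype p]
    [DecidableEq m] [DecidableEq p]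
    (a : Matrix m m R) (b : Matrix m p R) (c : Matrix p m R) (d : Matrix p p R)
    (a' : Matrix m m R) (ha1 : a * a' = 1) (ha2 : a' * a = 1)
    (hs : IsUnit (d - c * a' * b)) : IsUnit (fromBlocks a b c d) := by
  obtain ⟨S, hSval⟩ := hs
  have hs1 : (d - c * a' * b) * (S⁻¹).1 = 1 := by rw [← hSval]; exact S.mul_inv
  have hs2 : (S⁻¹).1 * (d - c * a' * b) = 1 := by rw [← hSval]; exact S.inv_mul
  set s : Matrix p p R := d - c * a' * b with hs_def
  set s' : Matrix p p R := (S⁻¹).1 with hs'_def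
  have hL : IsUnit (fromBlocks (1 : Matrix m m R) (0 : Matrix m p R) (c * a')
      (1 : Matrix p p R)) := by
    refine ⟨⟨_, fromBlocks (1 : Matrix m m R) (0 : Matrix m p R) (-(c * a'))
      (1 : Matrix p p R), ?_, ?_⟩, rfl⟩
    · show fromBlocks 1 0 (c * a') 1 * fromBlocks 1 0 (-(c * a')) 1 = 1
      rw [fromBlocks_multiply]
      simp
    · show fromBlocks 1 0 (-(c * a')) 1 * fromBlocks 1 0 (c * a') 1 = 1
      rw [fromBlocks_multiply]
      simp
  have hT : IsUnit (fromBlocks a b (0 : Matrix p m R) s) := by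
    refine ⟨⟨_, fromBlocks a' (-(a' * (b * s'))) (0 : Matrix p m R) s', ?_, ?_⟩, rfl⟩
    · show fromBlocks a b 0 s * fromBlocks a' (-(a' * (b * s'))) 0 s' = 1
      rw [fromBlocks_multiply]
      rw [show a * -(a' * (b * s')) + b * s' = 0 by
        rw [Matrix.mul_neg, ← Matrix.mul_assoc, ha1, Matrix.one_mul, neg_add_cancel]]
      simp [ha1, hs1]
    · show fromBlocks a' (-(a' * (b * s'))) 0 s' * fromBlocks a b 0 s = 1
      rw [fromBlocks_multiply]
      rw [show a' * b + -(a' * (b * s')) * s = 0 by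
        rw [Matrix.neg_mul, Matrix.mul_assoc a' (b * s') s, Matrix.mul_assoc b s' s, hs2,
          Matrix.mul_one, add_neg_cancel]]
      simp [ha2, hs2]
  have hfactor : fromBlocks a b c d =
      fromBlocks (1 : Matrix m m R) (0 : Matrix m p R) (c * a') (1 : Matrix p p R) *
        fromBlocks a b (0 : Matrix p m R) s := by
    rw [fromBlocks_multiply]
    rw [show c * a' * a = c by rw [Matrix.mul_assoc, ha2, Matrix.mul_one]]
    rw [show c * a' * b + 1 * s = d by rw [Matrix.one_mul, hs_def, add_comm, sub_add_cancel]]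
    simp
  rw [hfactor]
  exact hL.mul hT

lemma bost_isUnit_submatrix {R : Type*} [Ring R] {l m : Type*} [Fintype l] [Fintype m]
    [DecidableEq l] [DecidableEq m] (e : l ≃ m) (M : Matrix m m R) (h : IsUnit M) :
    IsUnit (M.submatrix e e) := by
  obtain ⟨U, hU⟩ := h
  refine ⟨⟨M.submatrix e e, Matrix.submatrix (U⁻¹).1 e e, ?_, ?_⟩, rfl⟩
  · rw [submatrix_mul_equiv, show M * (U⁻¹).1 = 1 by rw [← hU]; exact U.mul_inv,
      submatrix_one_equiv]
  · rw [submatrix_mul_equiv, show (U⁻¹).1 * M = 1 by rw [← hU]; exact U.inv_mul,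
      submatrix_one_equiv]

variable {A B : Type*} [NormedRing A] [NormedAlgebra ℂ A] [CompleteSpace A]
    [NormedRing B] [NormedAlgebra ℂ B] [CompleteSpace B]

lemma bost_scalar_spectral (φ : A →ₐ[ℂ] B) (hspec : ∀ a : A, spectrum ℂ (φ a) = spectrum ℂ a)
    (a : A) (h : IsUnit (φ a)) : IsUnit a := by
  rw [← spectrum.zero_notMem_iff ℂ] at h ⊢
  rwa [hspec] at h

lemma bost_key (φ : A →ₐ[ℂ] B) (hspec : ∀ a : A, spectrum ℂ (φ a) = spectrum ℂ a) :
    ∀ n : ℕ, ∃ δ : ℝ, 0 < δ ∧ ∀ x : Matrix (Fin n) (Fin n) A,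
      (∀ i j, ‖φ (x i j) - (1 : Matrix (Fin n) (Fin n) B) i j‖ < δ) → IsUnit x := by
  intro n
  induction n with
  | zero => exact ⟨1, one_pos, fun x _ => isUnit_of_subsingleton x⟩
  | succ n IH =>
    obtain ⟨δ, hδ0, hkey⟩ := IH
    set K : ℝ := ‖(1 : B)‖ + 1 with hK_def
    have hK1 : 1 ≤ K := by
      have := norm_nonneg (1 : B); linarith
    refine ⟨min (1/2) (δ / (2 * (K + 1))), by positivity, fun x hx => ?_⟩
    set δ' : ℝ := min (1/2) (δ / (2 * (K + 1))) with hδ'_def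
    have hδ'0 : 0 < δ' := by positivity
    have hδ'12 : δ' ≤ 1/2 := min_le_left _ _
    have hδ'δ : δ' ≤ δ / (2 * (K + 1)) := min_le_right _ _
    set e : Fin 1 ⊕ Fin n ≃ Fin (n + 1) := finSumFinEquiv.trans (finCongr (Nat.add_comm 1 n))
      with he_def
    set x' : Matrix (Fin 1 ⊕ Fin n) (Fin 1 ⊕ Fin n) A := x.submatrix e e with hx'_def
    have hx' : ∀ i j, ‖φ (x' i j) - (1 : Matrix (Fin 1 ⊕ Fin n) (Fin 1 ⊕ Fin n) B) i j‖ < δ' := by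
      intro i j
      have h1 : (1 : Matrix (Fin (n+1)) (Fin (n+1)) B) (e i) (e j)
          = (1 : Matrix (Fin 1 ⊕ Fin n) (Fin 1 ⊕ Fin n) B) i j := by
        simp [Matrix.one_apply, EmbeddingLike.apply_eq_iff_eq]
      have := hx (e i) (e j)
      rw [h1] at this
      exact this
    -- the (1,1) entry
    set a₀ : A := x' (Sum.inl 0) (Sum.inl 0) with ha₀_def
    have h00 : ‖φ a₀ - 1‖ < δ' := by
      have := hx' (Sum.inl 0) (Sum.inl 0)
      rwa [Matrix.one_apply_eq] at this
    have hlt1 : ‖1 - φ a₀‖ < 1 := by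
      rw [norm_sub_rev]; linarith
    set v : Bˣ := Units.oneSub (1 - φ a₀) hlt1 with hv_def
    have hv : (v : B) = φ a₀ := sub_sub_cancel 1 (φ a₀)
    have ha₀unit : IsUnit a₀ := bost_scalar_spectral φ hspec a₀ ⟨v, hv⟩
    set u : Aˣ := ha₀unit.unit with hu_def
    have hu : (u : A) = a₀ := ha₀unit.unit_spec
    have hinv : φ ((u⁻¹ : Aˣ) : A) = ((v⁻¹ : Bˣ) : B) := by
      have h1 : φ ((u⁻¹ : Aˣ) : A) * (v : B) = 1 := by
        rw [hv, ← hu, ← _root_.map_mul, Units.inv_mul, _root_.map_one]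
      calc φ ((u⁻¹ : Aˣ) : A) = φ ((u⁻¹ : Aˣ) : A) * ((v : B) * ((v⁻¹ : Bˣ) : B)) := by
            rw [Units.mul_inv, mul_one]
        _ = ((v⁻¹ : Bˣ) : B) := by rw [← mul_assoc, h1, one_mul]
    have hnv : ‖((v⁻¹ : Bˣ) : B)‖ ≤ K := by
      have hval : ((v⁻¹ : Bˣ) : B) = ∑' i : ℕ, (1 - φ a₀) ^ i := rfl
      have hb := tsum_geometric_le_of_norm_lt_one (1 - φ a₀) hlt1
      have h2 : (1 - ‖1 - φ a₀‖)⁻¹ ≤ 2 := by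
        have hn : ‖1 - φ a₀‖ ≤ 1/2 := by rw [norm_sub_rev]; linarith
        rw [show (2 : ℝ) = (1/2 : ℝ)⁻¹ by norm_num]
        apply inv_anti₀ <;> linarith
      rw [hval]
      calc ‖∑' i : ℕ, (1 - φ a₀) ^ i‖ ≤ ‖(1 : B)‖ - 1 + (1 - ‖1 - φ a₀‖)⁻¹ := hb
        _ ≤ K := by rw [hK_def]; linarith
    -- blocks
    set a : Matrix (Fin 1) (Fin 1) A := x'.toBlocks₁₁ with ha_def
    set b : Matrix (Fin 1) (Fin n) A := x'.toBlocks₁₂ with hb_def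
    set c : Matrix (Fin n) (Fin 1) A := x'.toBlocks₂₁ with hc_def
    set d : Matrix (Fin n) (Fin n) A := x'.toBlocks₂₂ with hd_def
    set a' : Matrix (Fin 1) (Fin 1) A := Matrix.of (fun _ _ => ((u⁻¹ : Aˣ) : A)) with ha'_def
    have ha_entries : ∀ i j : Fin 1, a i j = a₀ := by
      intro i j
      rw [Subsingleton.elim i 0, Subsingleton.elim j 0]
      rfl
    have ha1 : a * a' = 1 := by
      ext i j
      rw [Subsingleton.elim i j, Matrix.one_apply_eq, Matrix.mul_apply, Fin.sum_univ_one,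
        ha_entries, ← hu]
      exact u.mul_inv
    have ha2 : a' * a = 1 := by
      ext i j
      rw [Subsingleton.elim i j, Matrix.one_apply_eq, Matrix.mul_apply, Fin.sum_univ_one,
        ha_entries, ← hu]
      exact u.inv_mul
    -- Schur complement entry estimates
    have hs_entry : ∀ i j, (d - c * a' * b) i j = d i j - c i 0 * ((u⁻¹ : Aˣ) : A) * b 0 j := by
      intro i j
      simp only [Matrix.sub_apply, Matrix.mul_apply, Fin.sum_univ_one]
      rfl
    have hsmall : ∀ i j, ‖φ ((d - c * a' * b) i j) - (1 : Matrix (Fin n) (Fin n) B) i j‖ < δ := by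
      intro i j
      have hd1 : ‖φ (d i j) - (1 : Matrix (Fin n) (Fin n) B) i j‖ < δ' := by
        have := hx' (Sum.inr i) (Sum.inr j)
        have h1 : (1 : Matrix (Fin 1 ⊕ Fin n) (Fin 1 ⊕ Fin n) B) (Sum.inr i) (Sum.inr j)
            = (1 : Matrix (Fin n) (Fin n) B) i j := by
          simp [Matrix.one_apply]
        rwa [h1] at this
      have hc1 : ‖φ (c i 0)‖ < δ' := by
        have := hx' (Sum.inr i) (Sum.inl 0)
        rwa [Matrix.one_apply_ne (by simp), sub_zero] at this
      have hb1 : ‖φ (b 0 j)‖ < δ' := by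
        have := hx' (Sum.inl 0) (Sum.inr j)
        rwa [Matrix.one_apply_ne (by simp), sub_zero] at this
      rw [hs_entry i j, map_sub, _root_.map_mul, _root_.map_mul, sub_right_comm]
      have hprod : ‖φ (c i 0) * φ ((u⁻¹ : Aˣ) : A) * φ (b 0 j)‖ ≤ δ' * K * δ' := by
        calc ‖φ (c i 0) * φ ((u⁻¹ : Aˣ) : A) * φ (b 0 j)‖
            ≤ ‖φ (c i 0) * φ ((u⁻¹ : Aˣ) : A)‖ * ‖φ (b 0 j)‖ := norm_mul_le _ _
          _ ≤ ‖φ (c i 0)‖ * ‖φ ((u⁻¹ : Aˣ) : A)‖ * ‖φ (b 0 j)‖ := by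
              gcongr; exact norm_mul_le _ _
          _ ≤ δ' * K * δ' := by
              rw [hinv]
              exact mul_le_mul (mul_le_mul hc1.le hnv (norm_nonneg _) hδ'0.le) hb1.le
                (norm_nonneg _) (mul_nonneg hδ'0.le (by linarith))
      calc ‖φ (d i j) - (1 : Matrix (Fin n) (Fin n) B) i j
            - φ (c i 0) * φ ((u⁻¹ : Aˣ) : A) * φ (b 0 j)‖
          ≤ ‖φ (d i j) - (1 : Matrix (Fin n) (Fin n) B) i j‖
            + ‖φ (c i 0) * φ ((u⁻¹ : Aˣ) : A) * φ (b 0 j)‖ := norm_sub_le _ _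
        _ < δ' + δ' * K * δ' := by linarith
        _ ≤ δ := by
            have hK0 : (0:ℝ) ≤ K := by linarith
            have e0 : 0 ≤ δ' * K := mul_nonneg hδ'0.le hK0
            have e1 : δ' * K * δ' ≤ δ' * K * (1/2) :=
              mul_le_mul_of_nonneg_left hδ'12 e0
            have e3 : δ' * (K + 1) ≤ (δ / (2 * (K + 1))) * (K + 1) :=
              mul_le_mul_of_nonneg_right hδ'δ (by linarith)
            have e4 : (δ / (2 * (K + 1))) * (K + 1) = δ / 2 := by field_simp
            rw [e4] at e3
            nlinarith
    have hsUnit : IsUnit (d - c * a' * b) := hkey _ hsmall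
    have hx'Unit : IsUnit x' := by
      rw [← fromBlocks_toBlocks x']
      exact bost_isUnit_fromBlocks a b c d a' ha1 ha2 hsUnit
    have : IsUnit (x'.submatrix e.symm e.symm) := bost_isUnit_submatrix e.symm x' hx'Unit
    rwa [hx'_def, Matrix.submatrix_submatrix, Equiv.self_comp_symm, Matrix.submatrix_id_id]
      at this

lemma bost_isUnit_of_mul (R : Type*) [Ring R] (x y : R) (h1 : IsUnit (x * y))
    (h2 : IsUnit (y * x)) : IsUnit x := by
  obtain ⟨P, hP⟩ := h1
  obtain ⟨Q, hQ⟩ := h2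
  have hr : x * (y * (P⁻¹).1) = 1 := by
    rw [← mul_assoc, ← hP]; exact P.mul_inv
  have hl : ((Q⁻¹).1 * y) * x = 1 := by
    rw [mul_assoc, ← hQ]; exact Q.inv_mul
  have heq : (Q⁻¹).1 * y = y * (P⁻¹).1 := by
    calc (Q⁻¹).1 * y = ((Q⁻¹).1 * y) * (x * (y * (P⁻¹).1)) := by rw [hr, mul_one]
      _ = (((Q⁻¹).1 * y) * x) * (y * (P⁻¹).1) := by
          rw [mul_assoc ((Q⁻¹).1 * y) x (y * (P⁻¹).1)]
      _ = y * (P⁻¹).1 := by rw [hl, one_mul]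
  exact ⟨⟨x, y * (P⁻¹).1, hr, by rw [← heq, hl]⟩, rfl⟩

lemma bost_matrix_spectral (φ : A →ₐ[ℂ] B) (hdense : DenseRange φ)
    (hspec : ∀ a : A, spectrum ℂ (φ a) = spectrum ℂ a)
    (n : ℕ) (x : Matrix (Fin n) (Fin n) A) (h : IsUnit (x.map φ)) : IsUnit x := by
  obtain ⟨δ, hδ0, hkey⟩ := bost_key φ hspec n
  obtain ⟨U, hU⟩ := h
  set W : Matrix (Fin n) (Fin n) B := (U⁻¹).1 with hW_def
  have hUW : x.map φ * W = 1 := by rw [← hU]; exact U.mul_inv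
  have hWU : W * x.map φ = 1 := by rw [← hU]; exact U.inv_mul
  set C : ℝ := (∑ i, ∑ j, ‖x.map φ i j‖) + 1 with hC_def
  have hC0 : 0 < C := by positivity
  have hCentry : ∀ i j, ‖x.map φ i j‖ < C := by
    intro i j
    have h1 : ‖x.map φ i j‖ ≤ ∑ j', ‖x.map φ i j'‖ :=
      Finset.single_le_sum (fun k _ => norm_nonneg _) (Finset.mem_univ j)
    have h2 : (∑ j', ‖x.map φ i j'‖) ≤ ∑ i', ∑ j', ‖x.map φ i' j'‖ :=
      Finset.single_le_sum (f := fun i' => ∑ j', ‖x.map φ i' j'‖)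
        (fun k _ => Finset.sum_nonneg fun _ _ => norm_nonneg _) (Finset.mem_univ i)
    rw [hC_def]; linarith
  set ε : ℝ := δ / (n * C + 1) with hε_def
  have hε0 : 0 < ε := by positivity
  have hchoice : ∀ i j : Fin n, ∃ a : A, ‖φ a - W i j‖ < ε := by
    intro i j
    obtain ⟨a, ha⟩ := Metric.denseRange_iff.mp hdense (W i j) ε hε0
    exact ⟨a, by rwa [← dist_eq_norm, dist_comm]⟩
  choose y₀ hy₀ using hchoice
  set y : Matrix (Fin n) (Fin n) A := Matrix.of y₀ with hy_def
  have hy : ∀ i j, ‖φ (y i j) - W i j‖ < ε := hy₀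
  have hsum_bound : ∀ (f g : Fin n → B), (∀ k, ‖f k‖ < C) → (∀ k, ‖g k‖ < ε) →
      ‖∑ k, f k * g k‖ < δ := by
    intro f g hf hg
    have h1 : ‖∑ k, f k * g k‖ ≤ ∑ k : Fin n, C * ε := by
      refine (norm_sum_le _ _).trans (Finset.sum_le_sum fun k _ => ?_)
      exact (norm_mul_le _ _).trans
        (mul_le_mul (hf k).le (hg k).le (norm_nonneg _) hC0.le)
    have h2 : (∑ k : Fin n, C * ε) = n * C * ε := by
      rw [Finset.sum_const, Finset.card_univ, Fintype.card_fin, nsmul_eq_mul]; ring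
    have h3 : (n : ℝ) * C * ε < δ := by
      have hpos : (0:ℝ) < n * C + 1 := by positivity
      rw [hε_def]
      calc (n : ℝ) * C * (δ / (n * C + 1)) = δ * ((n * C) / (n * C + 1)) := by ring
        _ < δ * 1 := by
            apply mul_lt_mul_of_pos_left _ hδ0
            rw [div_lt_one hpos]
            have : (0:ℝ) ≤ (n : ℝ) * C := by positivity
            linarith
        _ = δ := mul_one δ
    linarith
  have hxy : IsUnit (x * y) := by
    apply hkey
    intro i j
    have e1 : φ ((x * y) i j) = ∑ k, x.map φ i k * φ (y k j) := by
      rw [show ((x * y) i j) = ∑ k, x i k * y k j from Matrix.mul_apply, map_sum]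
      simp [_root_.map_mul, Matrix.map_apply]
    have e2 : (1 : Matrix (Fin n) (Fin n) B) i j = ∑ k, x.map φ i k * W k j := by
      rw [← hUW, Matrix.mul_apply]
    rw [e1, e2, ← Finset.sum_sub_distrib]
    have e3 : ∀ k, x.map φ i k * φ (y k j) - x.map φ i k * W k j
        = x.map φ i k * (φ (y k j) - W k j) := fun k => (mul_sub _ _ _).symm
    rw [Finset.sum_congr rfl fun k _ => e3 k]
    exact hsum_bound _ _ (fun k => hCentry i k) (fun k => hy k j)
  have hyx : IsUnit (y * x) := by
    apply hkey
    intro i j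
    have e1 : φ ((y * x) i j) = ∑ k, φ (y i k) * x.map φ k j := by
      rw [show ((y * x) i j) = ∑ k, y i k * x k j from Matrix.mul_apply, map_sum]
      simp [_root_.map_mul, Matrix.map_apply]
    have e2 : (1 : Matrix (Fin n) (Fin n) B) i j = ∑ k, W i k * x.map φ k j := by
      rw [← hWU, Matrix.mul_apply]
    rw [e1, e2, ← Finset.sum_sub_distrib]
    have e3 : ∀ k, φ (y i k) * x.map φ k j - W i k * x.map φ k j
        = (φ (y i k) - W i k) * x.map φ k j := fun k => (sub_mul _ _ _).symm
    rw [Finset.sum_congr rfl fun k _ => e3 k]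
    have : ‖∑ k, (φ (y i k) - W i k) * x.map φ k j‖ ≤ ∑ k : Fin n, ε * C := by
      refine (norm_sum_le _ _).trans (Finset.sum_le_sum fun k _ => ?_)
      exact (norm_mul_le _ _).trans
        (mul_le_mul (hy i k).le (hCentry k j).le (norm_nonneg _) hε0.le)
    have h2 : (∑ k : Fin n, ε * C) = n * C * ε := by
      rw [Finset.sum_const, Finset.card_univ, Fintype.card_fin, nsmul_eq_mul]; ring
    have h3 : (n : ℝ) * C * ε < δ := by
      have hpos : (0:ℝ) < n * C + 1 := by positivity
      rw [hε_def]
      calc (n : ℝ) * C * (δ / (n * C + 1)) = δ * ((n * C) / (n * C + 1)) := by ring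
        _ < δ * 1 := by
            apply mul_lt_mul_of_pos_left _ hδ0
            rw [div_lt_one hpos]; linarith
        _ = δ := mul_one δ
    linarith
  exact bost_isUnit_of_mul _ x y hxy hyx



attribute [local instance] Matrix.linftyOpNormedRing Matrix.linftyOpNormedAlgebra

lemma bost_matrix_dense (φ : A →ₐ[ℂ] B) (hdense : DenseRange φ) (n : ℕ)
    (T : Matrix (Fin n) (Fin n) B) {ε : ℝ} (hε : 0 < ε) :
    ∃ z : Matrix (Fin n) (Fin n) A, ‖z.map φ - T‖ < ε := by
  have hnorm : ∀ M : Matrix (Fin n) (Fin n) B, ‖M‖ ≤ ∑ i, ∑ j, ‖M i j‖ := by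
    intro M
    have hnn : ‖M‖₊ ≤ ∑ i, ∑ j, ‖M i j‖₊ := by
      rw [Matrix.linfty_opNNNorm_def]
      refine Finset.sup_le fun i _ => ?_
      exact Finset.single_le_sum (f := fun i' => ∑ j, ‖M i' j‖₊)
        (fun _ _ => by positivity) (Finset.mem_univ i)
    have := NNReal.coe_le_coe.mpr hnn
    simpa [NNReal.coe_sum] using this
  set ε' : ℝ := ε / (n * n + 1) with hε'_def
  have hε'0 : 0 < ε' := by positivity
  have hchoice : ∀ i j : Fin n, ∃ a : A, ‖φ a - T i j‖ < ε' := by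
    intro i j
    obtain ⟨a, ha⟩ := Metric.denseRange_iff.mp hdense (T i j) ε' hε'0
    exact ⟨a, by rwa [← dist_eq_norm, dist_comm]⟩
  choose z₀ hz₀ using hchoice
  refine ⟨Matrix.of z₀, ?_⟩
  have hb : ∑ i, ∑ j, ‖((Matrix.of z₀).map φ - T) i j‖ ≤ ∑ i : Fin n, ∑ j : Fin n, ε' := by
    refine Finset.sum_le_sum fun i _ => Finset.sum_le_sum fun j _ => ?_
    have : ((Matrix.of z₀).map φ - T) i j = φ (z₀ i j) - T i j := rfl
    rw [this]
    exact (hz₀ i j).le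
  have hcard : ∑ i : Fin n, ∑ j : Fin n, ε' = (n * n) * ε' := by
    simp [Finset.sum_const, nsmul_eq_mul]; ring
  have hlt : ((n : ℝ) * n) * ε' < ε := by
    have hpos : (0:ℝ) < (n : ℝ) * n + 1 := by positivity
    rw [hε'_def]
    calc ((n : ℝ) * n) * (ε / (n * n + 1)) = ε * (((n:ℝ) * n) / (n * n + 1)) := by ring
      _ < ε * 1 := by
          apply mul_lt_mul_of_pos_left _ hε
          rw [div_lt_one hpos]
          have : (0:ℝ) ≤ (n : ℝ) * n := by positivity
          linarith
      _ = ε := mul_one ε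
  calc ‖(Matrix.of z₀).map φ - T‖ ≤ ∑ i, ∑ j, ‖((Matrix.of z₀).map φ - T) i j‖ := hnorm _
    _ ≤ (n * n) * ε' := by rw [← hcard]; exact hb
    _ < ε := hlt

theorem bost_main (φ : A →ₐ[ℂ] B) (hcont : Continuous φ) (hdense : DenseRange φ)
    (hspec : ∀ a : A, spectrum ℂ (φ a) = spectrum ℂ a) (n : ℕ) :
    ∃ G : C(GLn B n, GLn A n),
      ((⟨glMap φ.toRingHom n, continuous_glMap _ n hcont⟩ :
          C(GLn A n, GLn B n)).comp G).Homotopic (ContinuousMap.id _) ∧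
      (G.comp (⟨glMap φ.toRingHom n, continuous_glMap _ n hcont⟩ :
          C(GLn A n, GLn B n))).Homotopic (ContinuousMap.id _) := by
  rcases subsingleton_or_nontrivial B with hB | hB
  · -- degenerate case: `B`, hence `A`, is trivial
    haveI hA : Subsingleton A := by
      by_contra h
      rw [not_subsingleton_iff_nontrivial] at h
      obtain ⟨z, hz⟩ := spectrum.nonempty (0 : A)
      rw [← hspec 0] at hz
      exact (spectrum.mem_iff.mp hz) (isUnit_of_subsingleton _)
    haveI : Subsingleton (Matrix (Fin n) (Fin n) A) :=
      ⟨fun M N => by ext i j; exact Subsingleton.elim _ _⟩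
    haveI : Subsingleton (Matrix (Fin n) (Fin n) B) :=
      ⟨fun M N => by ext i j; exact Subsingleton.elim _ _⟩
    haveI : Subsingleton (GLn A n) := ⟨fun x y => Subtype.ext (Subsingleton.elim _ _)⟩
    haveI : Subsingleton (GLn B n) := ⟨fun x y => Subtype.ext (Subsingleton.elim _ _)⟩
    refine ⟨ContinuousMap.const _ ⟨1, isUnit_one⟩, ?_, ?_⟩
    · rw [show ((⟨glMap φ.toRingHom n, continuous_glMap _ n hcont⟩ :
          C(GLn A n, GLn B n)).comp (ContinuousMap.const _ ⟨1, isUnit_one⟩))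
          = ContinuousMap.id (GLn B n) from ContinuousMap.ext fun y => Subsingleton.elim _ _]
    · rw [show ((ContinuousMap.const _ (⟨1, isUnit_one⟩ : GLn A n)).comp
          (⟨glMap φ.toRingHom n, continuous_glMap _ n hcont⟩ : C(GLn A n, GLn B n)))
          = ContinuousMap.id (GLn A n) from ContinuousMap.ext fun y => Subsingleton.elim _ _]
  · -- main case
    have hopen : ∀ z : GLn B n, ∃ ρ : ℝ, 0 < ρ ∧
        Metric.ball z.1 ρ ⊆ {M : Matrix (Fin n) (Fin n) B | IsUnit M} := by
      intro z
      haveI : HasSummableGeomSeries (Matrix (Fin n) (Fin n) B) := by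
        haveI : @CompleteSpace (Matrix (Fin n) (Fin n) B) PseudoMetricSpace.toUniformSpace := by
          exact Matrix.instCompleteSpace _ _ _
        infer_instance
      obtain ⟨ρ, hρ0, hball⟩ := Metric.isOpen_iff.mp Units.isOpen z.1 z.2
      exact ⟨ρ, hρ0, hball⟩
    choose ρ hρ0 hρball using hopen
    have hxch : ∀ z : GLn B n, ∃ xz : Matrix (Fin n) (Fin n) A,
        ‖xz.map φ - z.1‖ < ρ z / 3 :=
      fun z => bost_matrix_dense φ hdense n z.1 (by have := hρ0 z; positivity)
    choose xmat hxmat using hxch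
    set U : GLn B n → Set (GLn B n) := fun z => {y | ‖y.1 - z.1‖ < ρ z / 3} with hU_def
    have hUopen : ∀ z, IsOpen (U z) := by
      intro z
      have : U z = (fun y : GLn B n => ‖y.1 - z.1‖) ⁻¹' Set.Iio (ρ z / 3) := rfl
      rw [this]
      exact ((continuous_subtype_val.sub continuous_const).norm).isOpen_preimage _ isOpen_Iio
    have hUcover : (Set.univ : Set (GLn B n)) ⊆ ⋃ z, U z := by
      intro y _
      refine Set.mem_iUnion.mpr ⟨y, ?_⟩
      show ‖y.1 - y.1‖ < ρ y / 3
      rw [sub_self, norm_zero]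
      have := hρ0 y; positivity
    haveI : TopologicalSpace.MetrizableSpace (Matrix (Fin n) (Fin n) B) :=
      inferInstanceAs (TopologicalSpace.MetrizableSpace (Fin n → Fin n → B))
    haveI : TopologicalSpace.MetrizableSpace (GLn B n) :=
      Topology.IsEmbedding.subtypeVal.metrizableSpace
    haveI : NormalSpace (GLn B n) := inferInstance
    haveI : ParacompactSpace (GLn B n) := by
      letI := TopologicalSpace.metrizableSpaceMetric (GLn B n)
      exact Metric.instParacompactSpace
    obtain ⟨f, hf⟩ := PartitionOfUnity.exists_isSubordinate isClosed_univ U hUopen hUcover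
    set G₀ : GLn B n → Matrix (Fin n) (Fin n) A := fun y => ∑ᶠ i, f i y • xmat i with hG₀
    have hG₀cont : Continuous G₀ :=
      hf.continuous_finsum_smul hUopen fun i => continuousOn_const
    -- `map φ` as an `ℝ`-linear map
    set Lφ : Matrix (Fin n) (Fin n) A →ₗ[ℝ] Matrix (Fin n) (Fin n) B :=
      LinearMap.restrictScalars ℝ (AlgHom.toLinearMap
        (φ.mapMatrix : Matrix (Fin n) (Fin n) A →ₐ[ℂ] Matrix (Fin n) (Fin n) B))
      with hLφ_def
    have hLφ : ∀ M : Matrix (Fin n) (Fin n) A, Lφ M = M.map φ := fun M => rfl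
    have hGmap : ∀ y, (G₀ y).map φ = ∑ᶠ i, f i y • (xmat i).map φ := by
      intro y
      have hsupp : (Function.support fun i => f i y • xmat i).Finite := by
        apply Set.Finite.subset (f.locallyFinite.point_finite y)
        intro i hi
        simp only [Function.mem_support] at hi ⊢
        intro h0
        exact hi (by rw [h0, zero_smul])
      have hmf := Lφ.toAddMonoidHom.map_finsum hsupp
      simp only [LinearMap.toAddMonoidHom_coe] at hmf
      calc (G₀ y).map φ = Lφ (∑ᶠ i, f i y • xmat i) := (hLφ _).symm
        _ = ∑ᶠ i, Lφ (f i y • xmat i) := hmf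
        _ = ∑ᶠ i, f i y • (xmat i).map φ := by
            refine finsum_congr fun i => ?_
            rw [_root_.map_smul, hLφ]
    have hseg : ∀ (y : GLn B n) (t : ℝ), 0 ≤ t → t ≤ 1 →
        IsUnit ((1 - t) • (G₀ y).map φ + t • y.1) := by
      intro y t ht0 ht1
      set T : Finset (GLn B n) := f.finsupport y with hT
      have hT_ne : T.Nonempty := by
        by_contra h
        rw [Finset.not_nonempty_iff_eq_empty] at h
        have hsum := f.sum_finsupport (Set.mem_univ y)
        rw [← hT] at hsum
        rw [h, Finset.sum_empty] at hsum
        exact zero_ne_one hsum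
      obtain ⟨i₀, hi₀T, hi₀max⟩ := T.exists_max_image ρ hT_ne
      have hmemU : ∀ i ∈ T, ‖y.1 - i.1‖ < ρ i / 3 := by
        intro i hiT
        have h1 : y ∈ Function.support (f i) := by
          have := (f.mem_finsupport y).mp (hT ▸ hiT)
          simpa using this
        have h2 : y ∈ tsupport (f i) := subset_closure h1
        exact hf i h2
      have hclose : ∀ i ∈ T, ‖(xmat i).map φ - y.1‖ < 2 * ρ i₀ / 3 := by
        intro i hiT
        have h3 : ‖i.1 - y.1‖ < ρ i / 3 := by
          rw [norm_sub_rev]; exact hmemU i hiT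
        have h4 : ρ i ≤ ρ i₀ := hi₀max i hiT
        calc ‖(xmat i).map φ - y.1‖ = ‖((xmat i).map φ - i.1) + (i.1 - y.1)‖ := by
              rw [sub_add_sub_cancel]
          _ ≤ ‖(xmat i).map φ - i.1‖ + ‖i.1 - y.1‖ := norm_add_le _ _
          _ < ρ i / 3 + ρ i / 3 := add_lt_add (hxmat i) h3
          _ ≤ 2 * ρ i₀ / 3 := by linarith
      have hGclose : ‖(G₀ y).map φ - y.1‖ < 2 * ρ i₀ / 3 := by
        rw [hGmap y]
        rw [show (∑ᶠ i, f i y • (xmat i).map φ) = ∑ i ∈ T, f i y • (xmat i).map φ from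
          (f.sum_finsupport_smul_eq_finsum (fun i _ => (xmat i).map φ)).symm]
        rw [show y.1 = ∑ i ∈ T, f i y • y.1 by
          rw [← Finset.sum_smul, f.sum_finsupport (Set.mem_univ y), one_smul]]
        rw [← Finset.sum_sub_distrib]
        have hterm : ∀ i ∈ T, f i y • (xmat i).map φ - f i y • y.1
            = f i y • ((xmat i).map φ - y.1) := fun i _ => (smul_sub _ _ _).symm
        rw [Finset.sum_congr rfl hterm]
        calc ‖∑ i ∈ T, f i y • ((xmat i).map φ - y.1)‖
            ≤ ∑ i ∈ T, ‖f i y • ((xmat i).map φ - y.1)‖ := norm_sum_le _ _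
          _ = ∑ i ∈ T, f i y * ‖(xmat i).map φ - y.1‖ := by
              refine Finset.sum_congr rfl fun i _ => ?_
              rw [norm_smul, Real.norm_of_nonneg (f.nonneg i y)]
          _ < ∑ i ∈ T, f i y * (2 * ρ i₀ / 3) := by
              refine Finset.sum_lt_sum_of_nonempty hT_ne fun i hiT => ?_
              have hfi : 0 < f i y := by
                have := (f.mem_finsupport y).mp (hT ▸ hiT)
                simp only [Function.mem_support] at this
                exact lt_of_le_of_ne (f.nonneg i y) (Ne.symm this)
              exact mul_lt_mul_of_pos_left (hclose i hiT) hfi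
          _ = 2 * ρ i₀ / 3 := by
              rw [← Finset.sum_mul, f.sum_finsupport (Set.mem_univ y), one_mul]
      have hyi₀ : ‖y.1 - i₀.1‖ < ρ i₀ / 3 := hmemU i₀ hi₀T
      have hGi₀ : ‖(G₀ y).map φ - i₀.1‖ < ρ i₀ := by
        calc ‖(G₀ y).map φ - i₀.1‖ = ‖((G₀ y).map φ - y.1) + (y.1 - i₀.1)‖ := by
              rw [sub_add_sub_cancel]
          _ ≤ ‖(G₀ y).map φ - y.1‖ + ‖y.1 - i₀.1‖ := norm_add_le _ _
          _ < 2 * ρ i₀ / 3 + ρ i₀ / 3 := add_lt_add hGclose hyi₀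
          _ = ρ i₀ := by ring
      apply hρball i₀
      rw [Metric.mem_ball, dist_eq_norm]
      have hdecomp : ((1 - t) • (G₀ y).map φ + t • y.1) - i₀.1
          = (1 - t) • ((G₀ y).map φ - i₀.1) + t • (y.1 - i₀.1) := by
        rw [smul_sub, smul_sub]
        rw [show (1 - t) • (G₀ y).map φ - (1 - t) • i₀.1 + (t • y.1 - t • i₀.1)
            = ((1 - t) • (G₀ y).map φ + t • y.1) - ((1 - t) • i₀.1 + t • i₀.1) by abel]
        rw [← add_smul]
        rw [show (1 - t) + t = (1:ℝ) by ring, one_smul]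
      rw [hdecomp]
      set a : ℝ := ‖(G₀ y).map φ - i₀.1‖
      set b : ℝ := ‖y.1 - i₀.1‖
      have hb' : b < ρ i₀ := lt_trans hyi₀ (by have := hρ0 i₀; linarith)
      calc ‖(1 - t) • ((G₀ y).map φ - i₀.1) + t • (y.1 - i₀.1)‖
          ≤ (1 - t) * a + t * b := by
            refine (norm_add_le _ _).trans ?_
            rw [norm_smul, norm_smul, Real.norm_of_nonneg (by linarith),
              Real.norm_of_nonneg ht0]
        _ ≤ max a b := by
            have e1 : 0 ≤ (1 - t) * (max a b - a) :=
              mul_nonneg (by linarith) (by simp [le_max_left])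
            have e2 : 0 ≤ t * (max a b - b) :=
              mul_nonneg ht0 (by simp [le_max_right])
            nlinarith
        _ < ρ i₀ := max_lt hGi₀ hb'
    have hGunit : ∀ y, IsUnit ((G₀ y).map φ) := by
      intro y
      have := hseg y 0 le_rfl zero_le_one
      simpa using this
    have hGAunit : ∀ y, IsUnit (G₀ y) :=
      fun y => bost_matrix_spectral φ hdense hspec n _ (hGunit y)
    set G : C(GLn B n, GLn A n) := ⟨fun y => ⟨G₀ y, hGAunit y⟩, hG₀cont.subtype_mk _⟩ with hG
    have hmapadd : ∀ (t : ℝ) (M : Matrix (Fin n) (Fin n) A) (N : Matrix (Fin n) (Fin n) A),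
        ((1 - t) • M + t • N).map φ = (1 - t) • M.map φ + t • N.map φ := by
      intro t M N
      rw [← hLφ, ← hLφ, ← hLφ, map_add, _root_.map_smul, _root_.map_smul]
    refine ⟨G, ⟨?_⟩, ⟨?_⟩⟩
    · -- homotopy from `glMap ∘ G` to `id` on `GLn B n`
      have hcont1 : Continuous fun p : unitInterval × GLn B n =>
          (1 - (p.1 : ℝ)) • (G₀ p.2).map φ + (p.1 : ℝ) • p.2.1 := by
        have c1 : Continuous fun p : unitInterval × GLn B n => (p.1 : ℝ) :=
          continuous_subtype_val.comp continuous_fst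
        exact ((continuous_const.sub c1).smul
            ((hG₀cont.comp continuous_snd).matrix_map hcont)).add
          (c1.smul (continuous_subtype_val.comp continuous_snd))
      refine ⟨⟨fun p => ⟨(1 - (p.1 : ℝ)) • (G₀ p.2).map φ + (p.1 : ℝ) • p.2.1,
        hseg p.2 p.1 p.1.2.1 p.1.2.2⟩, hcont1.subtype_mk _⟩, ?_, ?_⟩
      · intro y
        apply Subtype.ext
        show (1 - ((0 : unitInterval) : ℝ)) • (G₀ y).map φ + ((0 : unitInterval) : ℝ) • y.1
          = (G₀ y).map φ
        simp
      · intro y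
        apply Subtype.ext
        show (1 - ((1 : unitInterval) : ℝ)) • (G₀ y).map φ + ((1 : unitInterval) : ℝ) • y.1
          = y.1
        simp
    · -- homotopy from `G ∘ glMap` to `id` on `GLn A n`
      have hunit2 : ∀ (p : unitInterval × GLn A n),
          IsUnit ((1 - (p.1 : ℝ)) • G₀ (glMap φ.toRingHom n p.2) + (p.1 : ℝ) • p.2.1) := by
        intro p
        apply bost_matrix_spectral φ hdense hspec n
        rw [hmapadd]
        have : (p.2.1).map φ = (glMap φ.toRingHom n p.2).1 := rfl
        rw [this]
        exact hseg (glMap φ.toRingHom n p.2) (p.1 : ℝ) p.1.2.1 p.1.2.2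
      have hcont2 : Continuous fun p : unitInterval × GLn A n =>
          (1 - (p.1 : ℝ)) • G₀ (glMap φ.toRingHom n p.2) + (p.1 : ℝ) • p.2.1 := by
        have c1 : Continuous fun p : unitInterval × GLn A n => (p.1 : ℝ) :=
          continuous_subtype_val.comp continuous_fst
        exact ((continuous_const.sub c1).smul
            (hG₀cont.comp ((continuous_glMap φ.toRingHom n hcont).comp continuous_snd))).add
          (c1.smul (continuous_subtype_val.comp continuous_snd))
      refine ⟨⟨fun p => ⟨(1 - (p.1 : ℝ)) • G₀ (glMap φ.toRingHom n p.2) + (p.1 : ℝ) • p.2.1,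
        hunit2 p⟩, hcont2.subtype_mk _⟩, ?_, ?_⟩
      · intro x
        apply Subtype.ext
        show (1 - ((0 : unitInterval) : ℝ)) • G₀ (glMap φ.toRingHom n x)
            + ((0 : unitInterval) : ℝ) • x.1 = G₀ (glMap φ.toRingHom n x)
        simp
      · intro x
        apply Subtype.ext
        show (1 - ((1 : unitInterval) : ℝ)) • G₀ (glMap φ.toRingHom n x)
            + ((1 : unitInterval) : ℝ) • x.1 = x.1
        simp

end BostAux

/-- (Bost) If `φ : A → B` is a dense and spectral morphism of unital complex Banach algebras,
then for every `n ≥ 1` the induced map `GL_n(A) → GL_n(B)` is a homotopy equivalence. -/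
theorem bost_homotopyEquiv_GL {A B : Type*}
    [NormedRing A] [NormedAlgebra ℂ A] [CompleteSpace A]
    [NormedRing B] [NormedAlgebra ℂ B] [CompleteSpace B]
    (φ : A →ₐ[ℂ] B) (hcont : Continuous φ) (hdense : DenseRange φ)
    (hspec : ∀ a : A, spectrum ℂ (φ a) = spectrum ℂ a) :
    ∀ n : ℕ, 1 ≤ n →
      ∃ G : C(GLn B n, GLn A n),
        ((⟨glMap φ.toRingHom n, continuous_glMap _ n hcont⟩ :
            C(GLn A n, GLn B n)).comp G).Homotopic (ContinuousMap.id _) ∧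
        (G.comp (⟨glMap φ.toRingHom n, continuous_glMap _ n hcont⟩ :
            C(GLn A n, GLn B n))).Homotopic (ContinuousMap.id _) := by
  intro n _
  exact bost_main φ hcont hdense hspec n
end
end

section
/- Let A and B be unital commutative complex Banach algebras and let φ : A → B be a dense and spectral morphism. Then the map χ ↦ χ ∘ φ is a homeomorphism from the maximal ideal space X_B onto the maximal ideal space X_A. -/
open WeakDual WeakDual.CharacterSpace

/-- If `φ : A → B` is a dense and spectral morphism of unital commutative complex Banach
algebras, then `χ ↦ χ ∘ φ` is a homeomorphism from the maximal ideal space `X_B` onto `X_A`. -/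
theorem characterSpace_homeomorph_of_dense_spectral {A B : Type*}
    [NormedCommRing A] [NormedAlgebra ℂ A] [CompleteSpace A]
    [NormedCommRing B] [NormedAlgebra ℂ B] [CompleteSpace B]
    (φ : A →ₐ[ℂ] B) (hcont : Continuous φ) (hdense : DenseRange φ)
    (hspec : ∀ a : A, spectrum ℂ (φ a) = spectrum ℂ a) :
    ∃ h : WeakDual.characterSpace ℂ B ≃ₜ WeakDual.characterSpace ℂ A,
      ∀ (χ : WeakDual.characterSpace ℂ B) (a : A), h χ a = χ (φ a) := by
  classical
  -- the map
  set g : characterSpace ℂ B → characterSpace ℂ A :=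
    fun χ => equivAlgHom.symm ((equivAlgHom χ).comp φ) with hg
  have hg_apply : ∀ (χ : characterSpace ℂ B) (a : A), g χ a = χ (φ a) := by
    intro χ a
    simp [hg, equivAlgHom_symm_coe, equivAlgHom_coe]
  -- continuity
  have hg_cont : Continuous g := by
    apply Continuous.subtype_mk
    apply WeakDual.continuous_of_continuous_eval
    intro a
    exact (WeakDual.eval_continuous (φ a)).comp continuous_subtype_val
  -- injectivity
  have hg_inj : Function.Injective g := by
    intro χ₁ χ₂ hχ
    have hEq : ∀ a : A, χ₁ (φ a) = χ₂ (φ a) := by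
      intro a
      rw [← hg_apply χ₁ a, ← hg_apply χ₂ a, hχ]
    have c₁ : Continuous fun b => χ₁ b := (χ₁ : WeakDual ℂ B).continuous
    have c₂ : Continuous fun b => χ₂ b := (χ₂ : WeakDual ℂ B).continuous
    have : (fun b => χ₁ b) = fun b => χ₂ b :=
      hdense.equalizer c₁ c₂ (funext hEq)
    ext b
    exact congrFun this b
  -- surjectivity
  have hg_surj : Function.Surjective g := by
    intro ψ
    -- the closure of the image of the kernel of ψ is a proper ideal of B
    set K : Set A := {a : A | ψ a = 0} with hK
    set S : Set B := ⇑φ '' K with hS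
    have hmul_mem : ∀ u ∈ Set.range ⇑φ, ∀ v ∈ S, u * v ∈ S := by
      rintro u ⟨d, rfl⟩ v ⟨a, ha, rfl⟩
      exact ⟨d * a, by simp [hK, Set.mem_setOf_eq] at ha ⊢; simp [ha], map_mul φ d a⟩
    let N : Ideal B :=
      { carrier := closure S
        zero_mem' := subset_closure ⟨0, by simp [hK], map_zero φ⟩
        add_mem' := by
          intro x y hx hy
          refine map_mem_closure₂ continuous_add hx hy ?_
          rintro a ⟨a', ha', rfl⟩ b ⟨b', hb', rfl⟩
          exact ⟨a' + b', by simp [hK, Set.mem_setOf_eq] at ha' hb' ⊢; simp [ha', hb'],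
            map_add φ a' b'⟩
        smul_mem' := by
          intro c x hx
          simp only [smul_eq_mul]
          exact map_mem_closure₂ continuous_mul (hdense c) hx hmul_mem }
    have hNmem : ∀ x : B, x ∈ N ↔ x ∈ closure S := fun x => Iff.rfl
    -- N is a proper ideal
    have hN_ne_top : N ≠ ⊤ := by
      intro htop
      have h1 : (1 : B) ∈ closure S := (hNmem 1).mp (htop ▸ Submodule.mem_top)
      obtain ⟨y, hy_unit, hyS⟩ :=
        mem_closure_iff.mp h1 {x : B | IsUnit x} Units.isOpen isUnit_one
      obtain ⟨a, haK, rfl⟩ := hyS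
      have ha_unit : IsUnit a := by
        rw [← spectrum.zero_notMem_iff ℂ, ← hspec a]
        exact spectrum.zero_notMem ℂ hy_unit
      have : ψ a ∈ spectrum ℂ a := AlgHom.apply_mem_spectrum (equivAlgHom ψ) a
      rw [haK] at this
      exact spectrum.zero_notMem ℂ ha_unit this
    obtain ⟨M, hM_max, hNM⟩ := N.exists_le_maximal hN_ne_top
    refine ⟨M.toCharacterSpace, ?_⟩
    have hker : ∀ a : A, ψ a = 0 → M.toCharacterSpace (φ a) = 0 := by
      intro a ha
      exact M.toCharacterSpace_apply_eq_zero_of_mem (hNM (subset_closure ⟨a, ha, rfl⟩))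
    ext a
    rw [hg_apply]
    have hmem : ψ (a - ψ a • 1) = 0 := by
      simp
    have := hker _ hmem
    rw [map_sub, map_smul, map_one, map_sub, map_smul, map_one, sub_eq_zero] at this
    rw [this]
    simp
  -- assemble the homeomorphism
  let e : characterSpace ℂ B ≃ characterSpace ℂ A :=
    Equiv.ofBijective g ⟨hg_inj, hg_surj⟩
  exact ⟨Continuous.homeoOfEquivCompactToT2 (f := e) hg_cont,
    fun χ a => hg_apply χ a⟩
end

section
/- (Swan) Let φ : A → B be a dense and spectral morphism of unital complex Banach algebras. Then bsr A ≤ bsr B. -/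
/-- The set of unimodular `n`-tuples: tuples `(a₁, …, aₙ)` with `A·a₁ + ⋯ + A·aₙ = A`. -/
def Lg (A : Type*) [Ring A] (n : ℕ) : Set (Fin n → A) :=
  {a | ∃ x : Fin n → A, ∑ i, x i * a i = 1}

/-- The Bass stable rank: the least `n ≥ 1` such that every unimodular `(n+1)`-tuple is
reducible to a unimodular `n`-tuple. -/
noncomputable def bsr (A : Type*) [Ring A] : ℕ∞ :=
  sInf {c : ℕ∞ | ∃ n : ℕ, c = n ∧ 1 ≤ n ∧
    ∀ a ∈ Lg A (n + 1), ∃ x : Fin n → A,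
      (fun i : Fin n => a i.castSucc + x i * a (Fin.last n)) ∈ Lg A n}

/-- A tuple close enough to a unimodular tuple is unimodular. -/
lemma lg_of_close {B : Type*} [NormedRing B] [CompleteSpace B] {n : ℕ}
    {z b b' : Fin n → B} (h1 : ∑ i, z i * b i = 1)
    (h : ‖∑ i, z i * (b' i - b i)‖ < 1) : b' ∈ Lg B n := by
  have key : (∑ i, z i * b' i) - 1 = ∑ i, z i * (b' i - b i) := by
    rw [← h1, ← Finset.sum_sub_distrib]
    simp [mul_sub]
  have hu : IsUnit (∑ i, z i * b' i) := by
    rw [(sub_sub_cancel 1 (∑ i, z i * b' i)).symm]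
    apply isUnit_one_sub_of_norm_lt_one
    rwa [← neg_sub, norm_neg, key]
  obtain ⟨u, hu'⟩ := hu
  refine ⟨fun i => ↑u⁻¹ * z i, ?_⟩
  simp_rw [mul_assoc]
  rw [← Finset.mul_sum, ← hu', u.inv_mul]

/-- If `φ` is dense and spectral and `φ ∘ c` is unimodular, then `c` is unimodular. -/
lemma lg_of_map {A B : Type*}
    [NormedRing A] [NormedAlgebra ℂ A] [CompleteSpace A]
    [NormedRing B] [NormedAlgebra ℂ B] [CompleteSpace B]
    (φ : A →ₐ[ℂ] B) (hdense : DenseRange φ)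
    (hspec : ∀ a : A, spectrum ℂ (φ a) = spectrum ℂ a)
    {n : ℕ} {c : Fin n → A} (h : (fun i => φ (c i)) ∈ Lg B n) : c ∈ Lg A n := by
  obtain ⟨z, hz⟩ := h
  set C : ℝ := ∑ i, ‖φ (c i)‖ with hC
  have hC0 : 0 ≤ C := Finset.sum_nonneg fun i _ => norm_nonneg _
  set ε : ℝ := 1 / (C + 1) with hε
  have hεpos : 0 < ε := by positivity
  choose x hx using fun i => hdense.exists_dist_lt (z i) hεpos
  -- the approximating sum is a unit in B
  have hsum : (∑ i, φ (x i) * φ (c i)) - 1 = ∑ i, (φ (x i) - z i) * φ (c i) := by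
    rw [← hz, ← Finset.sum_sub_distrib]
    simp [sub_mul]
  have hnorm : ‖(∑ i, φ (x i) * φ (c i)) - 1‖ < 1 := by
    rw [hsum]
    calc ‖∑ i, (φ (x i) - z i) * φ (c i)‖
        ≤ ∑ i, ‖(φ (x i) - z i) * φ (c i)‖ := norm_sum_le _ _
      _ ≤ ∑ i, ε * ‖φ (c i)‖ := by
          refine Finset.sum_le_sum fun i _ => ?_
          refine le_trans (norm_mul_le _ _) ?_
          have : ‖φ (x i) - z i‖ < ε := by
            have := hx i
            rwa [dist_eq_norm, ← norm_neg, neg_sub] at this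
          exact mul_le_mul_of_nonneg_right this.le (norm_nonneg _)
      _ = ε * C := by rw [← Finset.mul_sum]
      _ < 1 := by
          rw [hε, div_mul_eq_mul_div, div_lt_one (by linarith)]
          linarith
  have huB : IsUnit (∑ i, φ (x i) * φ (c i)) := by
    rw [(sub_sub_cancel 1 (∑ i, φ (x i) * φ (c i))).symm]
    exact isUnit_one_sub_of_norm_lt_one (by rwa [← neg_sub, norm_neg])
  have hmap : φ (∑ i, x i * c i) = ∑ i, φ (x i) * φ (c i) := by
    rw [map_sum]; simp [map_mul]
  have huA : IsUnit (∑ i, x i * c i) := by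
    by_contra hcon
    have h0 : (0 : ℂ) ∈ spectrum ℂ (∑ i, x i * c i) := (spectrum.zero_mem_iff ℂ).mpr hcon
    rw [← hspec] at h0
    exact spectrum.not_isUnit_of_zero_mem ℂ h0 (hmap ▸ huB)
  obtain ⟨u, hu'⟩ := huA
  refine ⟨fun i => ↑u⁻¹ * x i, ?_⟩
  simp_rw [mul_assoc]
  rw [← Finset.mul_sum, ← hu', u.inv_mul]

/-- (Swan) If `φ : A → B` is a dense and spectral morphism of unital complex Banach algebras,
then `bsr A ≤ bsr B`. -/
theorem bsr_le_bsr_of_dense_spectral {A B : Type*}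
    [NormedRing A] [NormedAlgebra ℂ A] [CompleteSpace A]
    [NormedRing B] [NormedAlgebra ℂ B] [CompleteSpace B]
    (φ : A →ₐ[ℂ] B) (hcont : Continuous φ) (hdense : DenseRange φ)
    (hspec : ∀ a : A, spectrum ℂ (φ a) = spectrum ℂ a) :
    bsr A ≤ bsr B := by
  apply sInf_le_sInf
  rintro c ⟨n, rfl, hn1, hB⟩
  refine ⟨n, rfl, hn1, ?_⟩
  rintro a ⟨xa, hxa⟩
  -- push the tuple to B
  have haB : (fun i => φ (a i)) ∈ Lg B (n + 1) := by
    refine ⟨fun i => φ (xa i), ?_⟩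
    simp_rw [← map_mul, ← map_sum, hxa, map_one]
  obtain ⟨y, z, hz⟩ := hB _ haB
  set C : ℝ := (∑ i, ‖z i‖) * ‖φ (a (Fin.last n))‖ with hC
  have hC0 : 0 ≤ C := by positivity
  set ε : ℝ := 1 / (C + 1) with hε
  have hεpos : 0 < ε := by positivity
  choose x hx using fun i => hdense.exists_dist_lt (y i) hεpos
  refine ⟨x, ?_⟩
  have hmem : (fun i : Fin n => φ (a i.castSucc + x i * a (Fin.last n))) ∈ Lg B n := by
    refine lg_of_close hz ?_
    calc ‖∑ i, z i * (φ (a i.castSucc + x i * a (Fin.last n)) -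
            (φ (a i.castSucc) + y i * φ (a (Fin.last n))))‖
        ≤ ∑ i, ‖z i * (φ (a i.castSucc + x i * a (Fin.last n)) -
            (φ (a i.castSucc) + y i * φ (a (Fin.last n))))‖ := norm_sum_le _ _
      _ ≤ ∑ i, ‖z i‖ * (ε * ‖φ (a (Fin.last n))‖) := by
          refine Finset.sum_le_sum fun i _ => ?_
          refine le_trans (norm_mul_le _ _) (mul_le_mul_of_nonneg_left ?_ (norm_nonneg _))
          have heq : φ (a i.castSucc + x i * a (Fin.last n)) -
              (φ (a i.castSucc) + y i * φ (a (Fin.last n)))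
              = (φ (x i) - y i) * φ (a (Fin.last n)) := by
            rw [map_add, map_mul, sub_mul]; abel
          rw [heq]
          refine le_trans (norm_mul_le _ _) ?_
          have : ‖φ (x i) - y i‖ < ε := by
            have := hx i
            rwa [dist_eq_norm, ← norm_neg, neg_sub] at this
          exact mul_le_mul_of_nonneg_right this.le (norm_nonneg _)
      _ = ε * C := by rw [← Finset.sum_mul, hC]; ring
      _ < 1 := by
          rw [hε, div_mul_eq_mul_div, div_lt_one (by linarith)]
          linarith
  exact lg_of_map φ hdense hspec hmem
end

section
/- Let φ : A → B be a morphism of unital complex Banach algebras with dense image. Then tsr B ≤ tsr A. -/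
/-- The topological stable rank: the least `n ≥ 1` such that `Lg_n(A)` is dense in `Aⁿ`. -/
noncomputable def tsr (A : Type*) [Ring A] [TopologicalSpace A] : ℕ∞ :=
  sInf {c : ℕ∞ | ∃ n : ℕ, c = n ∧ 1 ≤ n ∧ Dense (Lg A n)}

/-- If `φ : A → B` is a morphism of unital complex Banach algebras with dense image,
then `tsr B ≤ tsr A`. -/
theorem tsr_le_tsr_of_denseRange {A B : Type*}
    [NormedRing A] [NormedAlgebra ℂ A] [CompleteSpace A]
    [NormedRing B] [NormedAlgebra ℂ B] [CompleteSpace B]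
    (φ : A →ₐ[ℂ] B) (hcont : Continuous φ) (hdense : DenseRange φ) :
    tsr B ≤ tsr A := by
  apply sInf_le_sInf
  rintro c ⟨n, rfl, hn, hA⟩
  refine ⟨n, rfl, hn, ?_⟩
  set f : (Fin n → A) → (Fin n → B) := fun a i => φ (a i) with hf
  have hfc : Continuous f := continuous_pi fun i => hcont.comp (continuous_apply i)
  have hfd : DenseRange f := by
    have hr : Set.range f = Set.univ.pi fun _ => Set.range φ := by
      ext b
      constructor
      · rintro ⟨a, rfl⟩ i _
        exact ⟨a i, rfl⟩
      · intro hb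
        choose a ha using fun i => hb i (Set.mem_univ i)
        exact ⟨a, funext ha⟩
    rw [DenseRange, hr]
    exact dense_pi _ fun i _ => hdense
  have himg : Dense (f '' Lg A n) := hfd.dense_image hfc hA
  refine himg.mono ?_
  rintro _ ⟨a, ⟨x, hx⟩, rfl⟩
  refine ⟨fun i => φ (x i), ?_⟩
  have := congrArg φ hx
  simpa [map_sum] using this
end

section
/- Let φ : A → B be a dense and spectral morphism of unital complex Banach algebras. Then for every n ≥ 1, φ maps Lg_n(A) into Lg_n(B) and the induced map on path components [Lg_n(A)] → [Lg_n(B)] is a bijection. -/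
/-- The map `Lg_n(A) → Lg_n(B)` induced by a unital ring morphism `φ : A → B`. -/
def lgMap {A B : Type*} [Ring A] [Ring B] (φ : A →+* B) (n : ℕ) : (Lg A n) → (Lg B n) :=
  fun a => ⟨fun i => φ (a.1 i), by
    obtain ⟨x, hx⟩ := a.2
    exact ⟨fun i => φ (x i), by
      simpa only [map_sum, map_mul, map_one] using congrArg φ hx⟩⟩

lemma continuous_lgMap {A B : Type*} [Ring A] [Ring B] [TopologicalSpace A] [TopologicalSpace B]
    (φ : A →+* B) (n : ℕ) (hφ : Continuous φ) : Continuous (lgMap φ n) :=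
  (continuous_pi fun i =>
    hφ.comp ((continuous_apply i).comp continuous_subtype_val)).subtype_mk _

open Metric Set

/-- `Lg B n` is open in a complete normed ring. -/
lemma lg_isOpen {B : Type*} [NormedRing B] [CompleteSpace B] (n : ℕ) :
    IsOpen (Lg B n) := by
  rw [isOpen_iff_mem_nhds]
  rintro b ⟨y, hy⟩
  have hF : Continuous fun c : Fin n → B => ∑ i, y i * c i :=
    continuous_finset_sum _ fun i _ => continuous_const.mul (continuous_apply i)
  have hU : IsOpen ((fun c : Fin n → B => ∑ i, y i * c i) ⁻¹' {x | IsUnit x}) :=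
    Units.isOpen.preimage hF
  refine Filter.mem_of_superset (hU.mem_nhds ?_) ?_
  · show IsUnit (∑ i, y i * b i)
    rw [hy]; exact isUnit_one
  · rintro c (hc : IsUnit _)
    obtain ⟨u, hu⟩ := hc
    have hu' : (u : B) = ∑ i, y i * c i := hu
    refine ⟨fun i => ↑u⁻¹ * y i, ?_⟩
    simp_rw [mul_assoc]
    rw [← Finset.mul_sum, ← hu', u.inv_mul]

/-- Spectral morphisms detect invertibility. -/
lemma isUnit_of_spectral {A B : Type*}
    [NormedRing A] [NormedAlgebra ℂ A] [NormedRing B] [NormedAlgebra ℂ B]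
    (φ : A →ₐ[ℂ] B) (hspec : ∀ a : A, spectrum ℂ (φ a) = spectrum ℂ a)
    {s : A} (h : IsUnit (φ s)) : IsUnit s := by
  by_contra hcon
  have h0 : (0 : ℂ) ∈ spectrum ℂ s := (spectrum.zero_mem_iff ℂ).2 hcon
  rw [← hspec] at h0
  exact ((spectrum.zero_mem_iff ℂ).1 h0) h

/-- A tuple whose image is unimodular is unimodular (for a dense spectral morphism). -/
lemma lg_pullback {A B : Type*}
    [NormedRing A] [NormedAlgebra ℂ A] [CompleteSpace A]
    [NormedRing B] [NormedAlgebra ℂ B] [CompleteSpace B]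
    (φ : A →ₐ[ℂ] B) (hdense : DenseRange φ)
    (hspec : ∀ a : A, spectrum ℂ (φ a) = spectrum ℂ a)
    {n : ℕ} (a : Fin n → A) (h : (fun i => φ (a i)) ∈ Lg B n) : a ∈ Lg A n := by
  obtain ⟨y, hy0⟩ := h
  have hy : ∑ i, y i * φ (a i) = 1 := by simpa using hy0
  set S : ℝ := ∑ i, ‖φ (a i)‖ with hS
  have hS0 : 0 ≤ S := Finset.sum_nonneg fun i _ => norm_nonneg _
  have hδ : (0 : ℝ) < 1 / (S + 1) := by positivity
  choose x hx using fun i => hdense.exists_dist_lt (y i) hδ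
  set e : B := ∑ i, (φ (x i) - y i) * φ (a i) with he
  have hnorm : ‖e‖ < 1 := by
    calc ‖e‖ ≤ ∑ i, ‖(φ (x i) - y i) * φ (a i)‖ := norm_sum_le _ _
      _ ≤ ∑ i, (1 / (S + 1)) * ‖φ (a i)‖ := by
          refine Finset.sum_le_sum fun i _ => ?_
          refine (norm_mul_le _ _).trans ?_
          refine mul_le_mul_of_nonneg_right ?_ (norm_nonneg _)
          have := hx i
          rw [dist_comm, dist_eq_norm] at this
          exact this.le
      _ = (1 / (S + 1)) * S := by rw [← Finset.mul_sum]
      _ < 1 := by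
          rw [div_mul_eq_mul_div, one_mul, div_lt_one (by linarith)]; linarith
  have key : φ (∑ i, x i * a i) = 1 + e := by
    rw [map_sum]
    have h1 : ∀ i ∈ Finset.univ, φ (x i * a i)
        = y i * φ (a i) + (φ (x i) - y i) * φ (a i) := fun i _ => by
      rw [map_mul, sub_mul]; abel
    rw [Finset.sum_congr rfl h1, Finset.sum_add_distrib, hy, he]
  have hunit : IsUnit (φ (∑ i, x i * a i)) := by
    rw [key]
    have h1 : ‖-e‖ < 1 := by rwa [norm_neg]
    exact ⟨Units.oneSub (-e) h1, by simp [Units.oneSub]⟩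
  obtain ⟨u, hu⟩ := isUnit_of_spectral φ hspec hunit
  refine ⟨fun i => ↑u⁻¹ * x i, ?_⟩
  simp_rw [mul_assoc]
  rw [← Finset.mul_sum, ← hu, u.inv_mul]

/-- Joinedness in a subtype from joinedness in the set. -/
lemma joined_subtype' {X : Type*} [TopologicalSpace X] {F : Set X} {x y : ↥F}
    (h : JoinedIn F x.1 y.1) : Joined x y := by
  simpa only [Subtype.coe_eta] using h.joined_subtype

/-- If the images of two tuples lie in a convex subset of `Lg B n`, the tuples are joined
in `Lg A n`. -/
lemma lg_segment {A B : Type*}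
    [NormedRing A] [NormedAlgebra ℂ A] [CompleteSpace A]
    [NormedRing B] [NormedAlgebra ℂ B] [CompleteSpace B]
    (φ : A →ₐ[ℂ] B) (hdense : DenseRange φ)
    (hspec : ∀ a : A, spectrum ℂ (φ a) = spectrum ℂ a)
    {n : ℕ} {c d : Fin n → A} {S : Set (Fin n → B)}
    (hconv : Convex ℝ S) (hsub : S ⊆ Lg B n)
    (hc : (fun i => φ (c i)) ∈ S) (hd : (fun i => φ (d i)) ∈ S) :
    JoinedIn (Lg A n) c d := by
  have hsmul : ∀ (r : ℝ) (z : A), φ (r • z) = r • φ z := fun r z =>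
    φ.toLinearMap.map_smul_of_tower r z
  have hseg : segment ℝ c d ⊆ Lg A n := by
    rintro z ⟨u, v, hu, hv, huv, rfl⟩
    apply lg_pullback φ hdense hspec
    have heq : (fun i => φ ((u • c + v • d) i))
        = u • (fun i => φ (c i)) + v • (fun i => φ (d i)) := by
      funext i
      show φ (u • c i + v • d i) = u • φ (c i) + v • φ (d i)
      rw [map_add, hsmul, hsmul]
    rw [heq]
    exact hsub (hconv hc hd hu hv huv)
  exact (((convex_segment c d).isPathConnected ⟨c, left_mem_segment ℝ c d⟩).joinedIn
    c (left_mem_segment ℝ c d) d (right_mem_segment ℝ c d)).mono hseg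

/-- Componentwise approximation by the dense range. -/
lemma lg_approx {A B : Type*} [NormedRing A] [NormedRing B]
    [NormedAlgebra ℂ A] [NormedAlgebra ℂ B] (φ : A →ₐ[ℂ] B) (hdense : DenseRange φ)
    {n : ℕ} (b : Fin n → B) {ε : ℝ} (hε : 0 < ε) :
    ∃ a : Fin n → A, dist (fun i => φ (a i)) b < ε := by
  choose a ha using fun i => hdense.exists_dist_lt (b i) hε
  refine ⟨a, (dist_pi_lt_iff hε).2 fun i => ?_⟩
  rw [dist_comm]; exact ha i

/-- If `φ : A → B` is a dense and spectral morphism of unital complex Banach algebras, then for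
every `n ≥ 1`, `φ` maps `Lg_n(A)` into `Lg_n(B)` and the induced map on path components
`[Lg_n(A)] → [Lg_n(B)]` is a bijection. -/
theorem pi0_Lg_bijective_of_dense_spectral {A B : Type*}
    [NormedRing A] [NormedAlgebra ℂ A] [CompleteSpace A]
    [NormedRing B] [NormedAlgebra ℂ B] [CompleteSpace B]
    (φ : A →ₐ[ℂ] B) (hcont : Continuous φ) (hdense : DenseRange φ)
    (hspec : ∀ a : A, spectrum ℂ (φ a) = spectrum ℂ a) :
    ∀ n : ℕ, 1 ≤ n →
      (∀ a ∈ Lg A n, (fun i => φ (a i)) ∈ Lg B n) ∧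
      Function.Bijective (pi0Map (continuous_lgMap φ.toRingHom n hcont)) := by
  intro n _
  refine ⟨?_, ?_, ?_⟩
  · rintro a ⟨x, hx⟩
    exact ⟨fun i => φ (x i), by
      simpa only [map_sum, map_mul, map_one] using congrArg φ hx⟩
  · -- injectivity
    intro q1 q2 hq
    revert hq
    refine Quotient.inductionOn₂ q1 q2 fun a a' => ?_
    intro hq
    have hj : Joined (lgMap φ.toRingHom n a) (lgMap φ.toRingHom n a') := Quotient.exact hq
    have hjoin : JoinedIn (Lg B n) (fun i => φ (a.1 i)) (fun i => φ (a'.1 i)) := by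
      obtain ⟨p⟩ := hj
      exact ⟨p.map continuous_subtype_val, fun t => (p t).2⟩
    obtain ⟨γ, hγ⟩ := hjoin
    have hK : IsCompact (range γ) := isCompact_range γ.continuous
    obtain ⟨ε, hε, hthick⟩ :=
      hK.exists_thickening_subset_open (lg_isOpen n) (range_subset_iff.2 hγ)
    have hball : ∀ t : unitInterval, ball (γ t) ε ⊆ Lg B n := fun t z hz =>
      hthick (Metric.mem_thickening_iff.2 ⟨γ t, mem_range_self t, hz⟩)
    obtain ⟨δ, hδ, hucont⟩ := Metric.uniformContinuous_iff.1
      (CompactSpace.uniformContinuous_of_continuous γ.continuous) (ε / 4) (by linarith)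
    obtain ⟨m, hm⟩ := exists_nat_one_div_lt hδ
    set M : ℕ := m + 1 with hMdef
    have hM : (0 : ℝ) < (M : ℝ) := by positivity
    set f : ℝ → unitInterval := Set.projIcc 0 1 zero_le_one with hfdef
    have hstep : ∀ k : ℕ, dist (γ (f (((k : ℝ) + 1) / M))) (γ (f ((k : ℝ) / M))) < ε / 4 := by
      intro k
      apply hucont
      have h1 : dist (f (((k : ℝ) + 1) / M)) (f ((k : ℝ) / M))
          ≤ dist (((k : ℝ) + 1) / M) ((k : ℝ) / M) := by
        simpa using (LipschitzWith.projIcc (a := (0:ℝ)) (b := 1) zero_le_one).dist_le_mul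
          (((k : ℝ) + 1) / M) ((k : ℝ) / M)
      refine lt_of_le_of_lt h1 ?_
      rw [Real.dist_eq]
      have h2 : ((k : ℝ) + 1) / M - (k : ℝ) / M = 1 / M := by field_simp; ring
      rw [h2, abs_of_pos (by positivity)]
      calc (1 : ℝ) / M = 1 / ((m : ℝ) + 1) := by norm_num [hMdef]
        _ < δ := hm
    have hf0 : f ((0 : ℝ) / M) = 0 := by
      rw [zero_div]
      exact Set.projIcc_left zero_le_one
    have hf1 : f ((M : ℝ) / M) = 1 := by
      rw [div_self (ne_of_gt hM)]
      exact Set.projIcc_right zero_le_one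
    have main : ∀ k : ℕ, ∃ c : Fin n → A,
        JoinedIn (Lg A n) a.1 c ∧ dist (fun i => φ (c i)) (γ (f ((k : ℝ) / M))) < ε / 4 := by
      intro k
      induction k with
      | zero =>
        refine ⟨a.1, JoinedIn.refl a.2, ?_⟩
        have h0 : γ (f ((0 : ℕ) / M : ℝ)) = fun i => φ (a.1 i) := by
          rw [Nat.cast_zero, hf0]; exact γ.source
        rw [Nat.cast_zero, show γ (f ((0:ℝ) / M)) = fun i => φ (a.1 i) from by
          rw [hf0]; exact γ.source, dist_self]
        positivity
      | succ k ih =>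
        obtain ⟨c, hjc, hdc⟩ := ih
        obtain ⟨d, hd⟩ := lg_approx φ hdense (γ (f (((k : ℝ) + 1) / M))) (by positivity :
          (0:ℝ) < ε / 4)
        have h1 : (fun i => φ (d i)) ∈ ball (γ (f ((k : ℝ) / M))) ε := by
          have ht := dist_triangle (fun i => φ (d i)) (γ (f (((k : ℝ) + 1) / M)))
            (γ (f ((k : ℝ) / M)))
          have hs := hstep k
          rw [mem_ball]
          linarith
        have h2 : (fun i => φ (c i)) ∈ ball (γ (f ((k : ℝ) / M))) ε := by
          rw [mem_ball]; linarith
        have hjoin2 : JoinedIn (Lg A n) c d :=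
          lg_segment φ hdense hspec (convex_ball _ _) (hball _) h2 h1
        refine ⟨d, hjc.trans hjoin2, ?_⟩
        rw [Nat.cast_succ]
        exact hd
    obtain ⟨c, hjc, hdc⟩ := main M
    have hfa' : γ (f ((M : ℝ) / M)) = fun i => φ (a'.1 i) := by
      rw [hf1]; exact γ.target
    have h1 : (fun i => φ (c i)) ∈ ball (γ (f ((M : ℝ) / M))) ε := by
      rw [mem_ball]; linarith
    have h2 : (fun i => φ (a'.1 i)) ∈ ball (γ (f ((M : ℝ) / M))) ε := by
      rw [mem_ball, hfa', dist_self]; exact hε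
    have hjoin2 : JoinedIn (Lg A n) c a'.1 :=
      lg_segment φ hdense hspec (convex_ball _ _) (hball _) h1 h2
    exact Quotient.sound (joined_subtype' (hjc.trans hjoin2))
  · -- surjectivity
    intro q
    refine Quotient.inductionOn q fun b => ?_
    obtain ⟨ε, hε, hball⟩ := Metric.isOpen_iff.1 (lg_isOpen n) b.1 b.2
    obtain ⟨a, ha⟩ := lg_approx φ hdense b.1 hε
    have haB : (fun i => φ (a i)) ∈ Lg B n := hball (mem_ball.2 ha)
    have haA : a ∈ Lg A n := lg_pullback φ hdense hspec a haB
    have hjoin : JoinedIn (Lg B n) (fun i => φ (a i)) b.1 :=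
      (((convex_ball b.1 ε).isPathConnected ⟨b.1, mem_ball_self hε⟩).joinedIn
        _ (mem_ball.2 ha) _ (mem_ball_self hε)).mono hball
    exact ⟨⟦⟨a, haA⟩⟧, Quotient.sound (joined_subtype'
      (x := lgMap φ.toRingHom n ⟨a, haA⟩) (y := b) hjoin)⟩
end

section
/- Let φ : A → B be a dense and spectral morphism of unital complex Banach algebras. Then gsr A = gsr B. -/
/-- The general stable rank: the least `n ≥ 1` such that `GL_m(A)` acts transitively on
`Lg_m(A)` for all `m ≥ n` (an invertible matrix acting on a column vector by
left multiplication). -/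
noncomputable def gsr (A : Type*) [Ring A] : ℕ∞ :=
  sInf {c : ℕ∞ | ∃ n : ℕ, c = n ∧ 1 ≤ n ∧ ∀ m : ℕ, n ≤ m →
    ∀ a ∈ Lg A m, ∀ b ∈ Lg A m,
      ∃ g : Matrix (Fin m) (Fin m) A, IsUnit g ∧ g.mulVec a = b}

open Matrix
open scoped NNReal

section PureRing
variable {R : Type*} [Ring R]

lemma GsrAux.isUnit_of_left_right {M : R} (l r : R) (hl : l * M = 1) (hr : M * r = 1) :
    IsUnit M := by
  have hlr : l = r := by rw [← mul_one l, ← hr, ← mul_assoc, hl, one_mul]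
  exact ⟨⟨M, r, hr, hlr ▸ hl⟩, rfl⟩

namespace GsrAux

lemma isUnit_oneByOne (M : Matrix (Fin 1) (Fin 1) R) (h : IsUnit (M 0 0)) : IsUnit M := by
  refine isUnit_of_left_right (Matrix.of fun _ _ => h.unit⁻¹.val)
    (Matrix.of fun _ _ => h.unit⁻¹.val) ?_ ?_ <;>
  · ext i j
    fin_cases i; fin_cases j
    simp [Matrix.mul_apply, Matrix.one_apply]

lemma isUnit_submatrix_iff {I J : Type*} [Fintype I] [Fintype J] [DecidableEq I] [DecidableEq J]
    (e : J ≃ I) (M : Matrix I I R) : IsUnit (M.submatrix e e) ↔ IsUnit M := by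
  constructor
  · intro h
    obtain ⟨u, hu⟩ := h
    have hM : M = (M.submatrix e e).submatrix e.symm e.symm := by
      simp [Matrix.submatrix_submatrix]
    refine isUnit_of_left_right (u⁻¹.val.submatrix e.symm e.symm)
      (u⁻¹.val.submatrix e.symm e.symm) ?_ ?_
    · rw [hM, Matrix.submatrix_mul_equiv, ← hu, u.inv_mul, Matrix.submatrix_one_equiv]
    · rw [hM, Matrix.submatrix_mul_equiv, ← hu, u.mul_inv, Matrix.submatrix_one_equiv]
  · intro h
    obtain ⟨u, hu⟩ := h
    refine isUnit_of_left_right (u⁻¹.val.submatrix e e) (u⁻¹.val.submatrix e e) ?_ ?_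
    · rw [Matrix.submatrix_mul_equiv, ← hu, u.inv_mul, Matrix.submatrix_one_equiv]
    · rw [Matrix.submatrix_mul_equiv, ← hu, u.mul_inv, Matrix.submatrix_one_equiv]

lemma isUnit_fromBlocks_diag {I J : Type*} [Fintype I] [Fintype J] [DecidableEq I] [DecidableEq J]
    {X : Matrix I I R} {Y : Matrix J J R} :
    IsUnit (Matrix.fromBlocks X 0 0 Y) ↔ IsUnit X ∧ IsUnit Y := by
  constructor
  · intro h
    obtain ⟨u, hu⟩ := h
    have h1 : Matrix.fromBlocks X 0 0 Y * u⁻¹.val = 1 := by rw [← hu]; exact u.mul_inv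
    have h2 : u⁻¹.val * Matrix.fromBlocks X 0 0 Y = 1 := by rw [← hu]; exact u.inv_mul
    rw [← Matrix.fromBlocks_toBlocks u⁻¹.val, Matrix.fromBlocks_multiply,
      ← Matrix.fromBlocks_one] at h1 h2
    have e11 := congrArg Matrix.toBlocks₁₁ h1
    have e11' := congrArg Matrix.toBlocks₁₁ h2
    have e22 := congrArg Matrix.toBlocks₂₂ h1
    have e22' := congrArg Matrix.toBlocks₂₂ h2
    simp only [Matrix.toBlocks_fromBlocks₁₁, Matrix.toBlocks_fromBlocks₂₂,
      Matrix.zero_mul, Matrix.mul_zero, add_zero, zero_add] at e11 e11' e22 e22'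
    exact ⟨isUnit_of_left_right _ _ e11' e11, isUnit_of_left_right _ _ e22' e22⟩
  · rintro ⟨hX, hY⟩
    refine isUnit_of_left_right (Matrix.fromBlocks hX.unit⁻¹.val 0 0 hY.unit⁻¹.val)
      (Matrix.fromBlocks hX.unit⁻¹.val 0 0 hY.unit⁻¹.val) ?_ ?_
    · rw [Matrix.fromBlocks_multiply, ← Matrix.fromBlocks_one]
      simp only [Matrix.zero_mul, Matrix.mul_zero, add_zero, zero_add]
      rw [hX.val_inv_mul, hY.val_inv_mul]
    · rw [Matrix.fromBlocks_multiply, ← Matrix.fromBlocks_one]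
      simp only [Matrix.zero_mul, Matrix.mul_zero, add_zero, zero_add]
      rw [hX.mul_val_inv, hY.mul_val_inv]

lemma schur_decomp {I J : Type*} [Fintype I] [Fintype J] [DecidableEq I] [DecidableEq J]
    (a : Matrix I I R) (b : Matrix I J R) (c : Matrix J I R) (d : Matrix J J R)
    (a' : Matrix I I R) (h1 : a * a' = 1) (h2 : a' * a = 1) :
    ∃ L U : Matrix (I ⊕ J) (I ⊕ J) R, IsUnit L ∧ IsUnit U ∧
      Matrix.fromBlocks a b c d =
        L * Matrix.fromBlocks a 0 0 (d - c * a' * b) * U := by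
  refine ⟨Matrix.fromBlocks 1 0 (c * a') 1, Matrix.fromBlocks 1 (a' * b) 0 1, ?_, ?_, ?_⟩
  · refine isUnit_of_left_right (Matrix.fromBlocks 1 0 (-(c * a')) 1)
      (Matrix.fromBlocks 1 0 (-(c * a')) 1) ?_ ?_ <;>
    · rw [Matrix.fromBlocks_multiply, ← Matrix.fromBlocks_one]
      simp
  · refine isUnit_of_left_right (Matrix.fromBlocks 1 (-(a' * b)) 0 1)
      (Matrix.fromBlocks 1 (-(a' * b)) 0 1) ?_ ?_ <;>
    · rw [Matrix.fromBlocks_multiply, ← Matrix.fromBlocks_one]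
      simp
  · rw [Matrix.fromBlocks_multiply, Matrix.fromBlocks_multiply]
    have hb : a * (a' * b) = b := by rw [← Matrix.mul_assoc, h1, Matrix.one_mul]
    have hc : c * a' * a = c := by rw [Matrix.mul_assoc, h2, Matrix.mul_one]
    have hd : c * a' * a * (a' * b) + (d - c * a' * b) = d := by
      rw [hc, ← Matrix.mul_assoc]
      abel
    simp only [Matrix.one_mul, Matrix.mul_one, Matrix.zero_mul, Matrix.mul_zero,
      add_zero, zero_add]
    rw [hd, hb, hc]

lemma lg_mulVec {m : ℕ} (g : Matrix (Fin m) (Fin m) R) (hg : IsUnit g) (a : Fin m → R)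
    (ha : a ∈ Lg R m) : g.mulVec a ∈ Lg R m := by
  obtain ⟨x, hx⟩ := ha
  refine ⟨Matrix.vecMul x hg.unit⁻¹.val, ?_⟩
  have h0 : ∑ i, (Matrix.vecMul x hg.unit⁻¹.val) i * (g.mulVec a) i
      = Matrix.vecMul x hg.unit⁻¹.val ⬝ᵥ g.mulVec a := rfl
  rw [h0, Matrix.dotProduct_mulVec, Matrix.vecMul_vecMul, hg.val_inv_mul, Matrix.vecMul_one]
  exact hx

lemma exists_unit_mulVec_eq {m : ℕ} (x c v : Fin m → R) (hx : ∑ i, x i * c i = 1)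
    (hs : IsUnit (1 + ∑ j, x j * v j)) :
    ∃ g : Matrix (Fin m) (Fin m) R, IsUnit g ∧ g.mulVec c = c + v := by
  set s : R := 1 + ∑ j, x j * v j with hsdef
  set t : R := hs.unit⁻¹.val with htdef
  have hst : s * t = 1 := hs.mul_val_inv
  have hts : t * s = 1 := hs.val_inv_mul
  set V : Matrix (Fin m) (Fin m) R := Matrix.of (fun i j => v i * x j) with hV
  set W : Matrix (Fin m) (Fin m) R := Matrix.of (fun i j => v i * (t * x j)) with hW
  have hVW : V * W = Matrix.of (fun i j => v i * ((s - 1) * (t * x j))) := by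
    ext i j
    simp only [Matrix.mul_apply, hV, hW, Matrix.of_apply]
    calc ∑ k, v i * x k * (v k * (t * x j))
        = ∑ k, v i * (x k * v k * (t * x j)) := by
          refine Finset.sum_congr rfl fun k _ => by simp only [mul_assoc]
      _ = v i * ((∑ k, x k * v k) * (t * x j)) := by
          rw [Finset.sum_mul, Finset.mul_sum]
      _ = v i * ((s - 1) * (t * x j)) := by rw [hsdef, add_sub_cancel_left]
  have hWV : W * V = Matrix.of (fun i j => v i * (t * ((s - 1) * x j))) := by
    ext i j
    simp only [Matrix.mul_apply, hV, hW, Matrix.of_apply]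
    calc ∑ k, v i * (t * x k) * (v k * x j)
        = ∑ k, v i * (t * (x k * v k * x j)) := by
          refine Finset.sum_congr rfl fun k _ => by simp only [mul_assoc]
      _ = v i * (t * ((∑ k, x k * v k) * x j)) := by
          rw [Finset.sum_mul, Finset.mul_sum, Finset.mul_sum]
      _ = v i * (t * ((s - 1) * x j)) := by rw [hsdef, add_sub_cancel_left]
  have inner1 : ∀ j, x j - t * x j - (s - 1) * (t * x j) = 0 := by
    intro j
    rw [sub_mul, one_mul, ← mul_assoc, hst, one_mul]
    exact sub_self _
  have inner2 : ∀ j, x j - t * x j - t * ((s - 1) * x j) = 0 := by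
    intro j
    rw [sub_mul, one_mul, mul_sub, ← mul_assoc, hts, one_mul]
    exact sub_self _
  have hr : (1 + V) * (1 - W) = 1 := by
    have expand : (1 + V) * (1 - W) = 1 + (V - W - V * W) := by noncomm_ring
    rw [expand, hVW]
    have h0 : V - W - Matrix.of (fun i j => v i * ((s - 1) * (t * x j))) = 0 := by
      ext i j
      simp only [Matrix.sub_apply, Matrix.of_apply, hV, hW, Matrix.zero_apply]
      rw [← mul_sub, ← mul_sub, inner1, mul_zero]
    rw [h0, add_zero]
  have hl : (1 - W) * (1 + V) = 1 := by
    have expand : (1 - W) * (1 + V) = 1 + (V - W - W * V) := by noncomm_ring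
    rw [expand, hWV]
    have h0 : V - W - Matrix.of (fun i j => v i * (t * ((s - 1) * x j))) = 0 := by
      ext i j
      simp only [Matrix.sub_apply, Matrix.of_apply, hV, hW, Matrix.zero_apply]
      rw [← mul_sub, ← mul_sub, inner2, mul_zero]
    rw [h0, add_zero]
  refine ⟨1 + V, isUnit_of_left_right (1 - W) (1 - W) hl hr, ?_⟩
  funext i
  rw [Matrix.add_mulVec, Matrix.one_mulVec]
  have h0 : V.mulVec c = v := by
    funext k
    simp only [Matrix.mulVec, dotProduct, hV, Matrix.of_apply, mul_assoc,
      ← Finset.mul_sum, hx, mul_one]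
  rw [h0]

end GsrAux
end PureRing

namespace GsrAux

section Analytic

attribute [local instance] Matrix.linftyOpNormedRing

lemma isUnit_of_norm_sub_one_lt {R : Type*} [NormedRing R] [CompleteSpace R]
    (b : R) (h : ‖b - 1‖ < 1) : IsUnit b := by
  have h' : ‖1 - b‖ < 1 := by rwa [norm_sub_rev] at h
  have h0 := (Units.oneSub (1 - b) h').isUnit
  rwa [Units.val_oneSub, sub_sub_cancel] at h0

variable {B : Type*} [NormedRing B]

lemma matrix_entry_norm_le {k : ℕ} (X : Matrix (Fin k) (Fin k) B) (i j : Fin k) :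
    ‖X i j‖ ≤ ‖X‖ := by
  have h : ‖X i j‖₊ ≤ ‖X‖₊ := by
    rw [Matrix.linfty_opNNNorm_def]
    exact le_trans (Finset.single_le_sum (f := fun j => ‖X i j‖₊)
      (fun _ _ => zero_le) (Finset.mem_univ j))
      (Finset.le_sup (f := fun i => ∑ j, ‖X i j‖₊) (Finset.mem_univ i))
  exact_mod_cast h

lemma matrix_norm_le_of_entries {k : ℕ} (X : Matrix (Fin k) (Fin k) B) {δ : ℝ} (hδ : 0 ≤ δ)
    (h : ∀ i j, ‖X i j‖ ≤ δ) : ‖X‖ ≤ k * δ := by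
  have h' : ‖X‖₊ ≤ (k : ℝ≥0) * δ.toNNReal := by
    rw [Matrix.linfty_opNNNorm_def]
    refine Finset.sup_le fun i _ => ?_
    calc ∑ j, ‖X i j‖₊ ≤ ∑ _j : Fin k, δ.toNNReal :=
          Finset.sum_le_sum fun j _ => by
            rw [← norm_toNNReal]
            exact Real.toNNReal_le_toNNReal (h i j)
      _ = (k : ℝ≥0) * δ.toNNReal := by
            rw [Finset.sum_const, Finset.card_univ, Fintype.card_fin, nsmul_eq_mul]
  calc ‖X‖ = ((‖X‖₊ : ℝ≥0) : ℝ) := (coe_nnnorm _).symm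
    _ ≤ (((k : ℝ≥0) * δ.toNNReal : ℝ≥0) : ℝ) := by exact_mod_cast h'
    _ = (k : ℝ) * δ := by rw [NNReal.coe_mul, Real.coe_toNNReal _ hδ]; norm_num

end Analytic

section Main

attribute [local instance] Matrix.linftyOpNormedRing

variable {A B : Type*}
    [NormedRing A] [NormedAlgebra ℂ A] [CompleteSpace A]
    [NormedRing B] [NormedAlgebra ℂ B] [CompleteSpace B]
    (φ : A →ₐ[ℂ] B) (hdense : DenseRange φ)
    (hspec : ∀ a : A, spectrum ℂ (φ a) = spectrum ℂ a)

omit hdense hspec in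
lemma theta_mul {I : Type*} [Fintype I] [DecidableEq I] (M N : Matrix I I A) :
    (M * N).map ⇑φ = M.map ⇑φ * N.map ⇑φ := by
  simpa only [AlgHom.mapMatrix_apply] using map_mul (AlgHom.mapMatrix (m := I) φ) M N

omit hdense hspec in
lemma theta_unit {I : Type*} [Fintype I] [DecidableEq I] {M : Matrix I I A} (h : IsUnit M) :
    IsUnit (M.map ⇑φ) := by
  simpa only [AlgHom.mapMatrix_apply] using h.map (AlgHom.mapMatrix (m := I) φ)

omit hdense in
include hspec in
lemma unit_iff (a : A) : IsUnit (φ a) ↔ IsUnit a := by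
  rw [← spectrum.zero_notMem_iff ℂ, ← spectrum.zero_notMem_iff ℂ, hspec a]

omit hspec in
include hdense in
lemma approx_matrix {k : ℕ} (G : Matrix (Fin k) (Fin k) B) {ε : ℝ} (hε : 0 < ε) :
    ∃ N : Matrix (Fin k) (Fin k) A,
      (∀ i j, ‖φ (N i j) - G i j‖ < ε) ∧ ‖N.map ⇑φ - G‖ < ε * (k + 1) := by
  choose nf hnf using fun i j => hdense.exists_dist_lt (G i j) hε
  refine ⟨Matrix.of nf, fun i j => ?_, ?_⟩
  · rw [← dist_eq_norm, dist_comm]; exact hnf i j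
  · have hent : ∀ i j, ‖((Matrix.of nf).map ⇑φ - G) i j‖ ≤ ε := by
      intro i j
      have : ((Matrix.of nf).map ⇑φ - G) i j = φ (nf i j) - G i j := by
        simp [Matrix.sub_apply, Matrix.map_apply]
      rw [this, ← dist_eq_norm, dist_comm]
      exact (hnf i j).le
    calc ‖(Matrix.of nf).map ⇑φ - G‖ ≤ k * ε := matrix_norm_le_of_entries _ hε.le hent
      _ < ε * (k + 1) := by nlinarith [hε]

include hdense hspec in
lemma lg_of_phi {m : ℕ} (a : Fin m → A) (h : (fun i => φ (a i)) ∈ Lg B m) : a ∈ Lg A m := by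
  obtain ⟨z, hz⟩ := h
  set K := ∑ i, ‖φ (a i)‖ with hK
  have hK0 : 0 ≤ K := Finset.sum_nonneg fun _ _ => norm_nonneg _
  have hδ : (0 : ℝ) < 1 / (K + 1) := by positivity
  choose xf hxf using fun i => hdense.exists_dist_lt (z i) hδ
  set s := ∑ i, xf i * a i with hs
  have hφs : φ s - 1 = ∑ i, (φ (xf i) - z i) * φ (a i) := by
    rw [hs, _root_.map_sum]
    simp only [_root_.map_mul]
    rw [← hz, ← Finset.sum_sub_distrib]
    exact Finset.sum_congr rfl fun i _ => by rw [sub_mul]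
  have hnorm : ‖φ s - 1‖ < 1 := by
    rw [hφs]
    calc ‖∑ i, (φ (xf i) - z i) * φ (a i)‖ ≤ ∑ i, ‖(φ (xf i) - z i) * φ (a i)‖ :=
          norm_sum_le _ _
      _ ≤ ∑ i, (1 / (K + 1)) * ‖φ (a i)‖ := by
          refine Finset.sum_le_sum fun i _ => ?_
          refine le_trans (norm_mul_le _ _) ?_
          refine mul_le_mul_of_nonneg_right ?_ (norm_nonneg _)
          rw [← dist_eq_norm, dist_comm]
          exact (hxf i).le
      _ = (1 / (K + 1)) * K := by rw [← Finset.mul_sum]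
      _ < 1 := by rw [one_div, inv_mul_lt_iff₀ (by positivity), mul_one]; linarith
  have hsu : IsUnit s := (unit_iff φ hspec s).mp (isUnit_of_norm_sub_one_lt _ hnorm)
  refine ⟨fun i => hsu.unit⁻¹.val * xf i, ?_⟩
  calc ∑ i, hsu.unit⁻¹.val * xf i * a i = hsu.unit⁻¹.val * ∑ i, xf i * a i := by
        rw [Finset.mul_sum]
        exact Finset.sum_congr rfl fun i _ => (mul_assoc _ _ _)
    _ = 1 := by rw [← hs]; exact hsu.val_inv_mul

omit hdense hspec in
lemma map_mulVec {m : ℕ} (M : Matrix (Fin m) (Fin m) A) (a : Fin m → A) :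
    (M.map ⇑φ).mulVec (fun i => φ (a i)) = fun i => φ (M.mulVec a i) := by
  funext i
  simp [Matrix.mulVec, dotProduct, Matrix.map_apply, _root_.map_sum, _root_.map_mul]

include hdense hspec in
lemma mat_spec : ∀ (m : ℕ) (M : Matrix (Fin m) (Fin m) A), IsUnit (M.map ⇑φ) → IsUnit M := by
  intro m
  induction m with
  | zero =>
    intro M _
    have h0 : M = 1 := by ext i j; exact i.elim0
    rw [h0]; exact isUnit_one
  | succ m ih =>
    have step : ∀ P : Matrix (Fin (m + 1)) (Fin (m + 1)) A, ‖P.map ⇑φ - 1‖ < 1 → IsUnit P := by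
      intro P hP
      have hθP : IsUnit (P.map ⇑φ) := by
        haveI : @CompleteSpace (Matrix (Fin (m + 1)) (Fin (m + 1)) B)
            (@PseudoMetricSpace.toUniformSpace _
              (Matrix.linftyOpNormedRing (n := Fin (m + 1)) (α := B)).toPseudoMetricSpace) := by
          exact (inferInstance : CompleteSpace (Matrix (Fin (m + 1)) (Fin (m + 1)) B))
        exact isUnit_of_norm_sub_one_lt _ hP
      have h00 : IsUnit (P 0 0) := by
        refine (unit_iff φ hspec _).mp (isUnit_of_norm_sub_one_lt _ ?_)
        have he : φ (P 0 0) - 1 = (P.map ⇑φ - 1) 0 0 := by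
          simp [Matrix.sub_apply, Matrix.map_apply, Matrix.one_apply]
        rw [he]
        exact lt_of_le_of_lt (matrix_entry_norm_le _ 0 0) hP
      let f : (Fin 1 ⊕ Fin m) ≃ Fin (m + 1) :=
        finSumFinEquiv.trans (finCongr (Nat.add_comm 1 m))
      have hf0 : f (Sum.inl 0) = 0 := rfl
      set P' := P.submatrix f f with hP'def
      set a := P'.toBlocks₁₁ with hadef
      set b := P'.toBlocks₁₂ with hbdef
      set c := P'.toBlocks₂₁ with hcdef
      set d := P'.toBlocks₂₂ with hddef
      have hblocks : Matrix.fromBlocks a b c d = P' := Matrix.fromBlocks_toBlocks P'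
      have ha00 : a 0 0 = P 0 0 := by
        show P' (Sum.inl 0) (Sum.inl 0) = P 0 0
        rw [hP'def, Matrix.submatrix_apply, hf0]
      have haM : IsUnit a := isUnit_oneByOne a (ha00 ▸ h00)
      obtain ⟨L, U, hL, hU, hdec⟩ :=
        schur_decomp a b c d haM.unit⁻¹.val haM.mul_val_inv haM.val_inv_mul
      set S := d - c * haM.unit⁻¹.val * b with hSdef
      have hθP' : IsUnit (P'.map ⇑φ) := by
        rw [hP'def, ← Matrix.submatrix_map]
        exact (isUnit_submatrix_iff f (P.map ⇑φ)).mpr hθP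
      have hθdec : P'.map ⇑φ =
          (L.map ⇑φ) * Matrix.fromBlocks (a.map ⇑φ) 0 0 (S.map ⇑φ) * (U.map ⇑φ) := by
        rw [← hblocks, hdec, theta_mul φ, theta_mul φ, Matrix.fromBlocks_map,
          Matrix.map_zero ⇑φ (map_zero φ), Matrix.map_zero ⇑φ (map_zero φ)]
      have hθS : IsUnit (S.map ⇑φ) := by
        have h1 : IsUnit ((L.map ⇑φ) *
            (Matrix.fromBlocks (a.map ⇑φ) 0 0 (S.map ⇑φ) * (U.map ⇑φ))) := by
          rw [← mul_assoc, ← hθdec]; exact hθP'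
        have hLφ : IsUnit (L.map ⇑φ) := theta_unit φ hL
        have hUφ : IsUnit (U.map ⇑φ) := theta_unit φ hU
        rw [← hLφ.unit_spec] at h1
        have h2 := (Units.isUnit_units_mul hLφ.unit _).mp h1
        rw [← hUφ.unit_spec] at h2
        have h3 := (Units.isUnit_mul_units _ hUφ.unit).mp h2
        exact (isUnit_fromBlocks_diag.mp h3).2
      have hS : IsUnit S := ih S hθS
      have hmid : IsUnit (Matrix.fromBlocks a 0 0 S) := isUnit_fromBlocks_diag.mpr ⟨haM, hS⟩
      have hPB : IsUnit P' := by
        rw [← hblocks, hdec]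
        exact (hL.mul hmid).mul hU
      exact (isUnit_submatrix_iff f P).mp hPB
    intro M hM
    set G := hM.unit⁻¹.val with hGdef
    have hG1 : M.map ⇑φ * G = 1 := hM.mul_val_inv
    have hG2 : G * M.map ⇑φ = 1 := hM.val_inv_mul
    set x := ‖M.map ⇑φ‖ with hxdef
    have hMn : (0 : ℝ) ≤ x := norm_nonneg _
    have hεpos : (0 : ℝ) < 1 / ((m + 2) * (x + 1)) := by positivity
    have hkey : (1 / ((m + 2) * (x + 1)) : ℝ) * (((m + 1 : ℕ) : ℝ) + 1) = 1 / (x + 1) := by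
      have hm2 : ((m : ℝ) + 2) ≠ 0 := by positivity
      have hx1 : (x + 1 : ℝ) ≠ 0 := by positivity
      push_cast
      rw [div_mul_eq_mul_div, one_mul, div_eq_div_iff (by positivity) hx1]
      ring
    obtain ⟨N, _, hNn⟩ := approx_matrix φ hdense G hεpos
    obtain ⟨N', _, hNn'⟩ := approx_matrix φ hdense G hεpos
    have hbound : ∀ X : Matrix (Fin (m + 1)) (Fin (m + 1)) A,
        ‖X.map ⇑φ - G‖ < 1 / ((m + 2) * (x + 1)) * (((m + 1 : ℕ) : ℝ) + 1) →
        x * ‖X.map ⇑φ - G‖ < 1 := by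
      intro X hX
      rw [hkey] at hX
      calc x * ‖X.map ⇑φ - G‖ ≤ x * (1 / (x + 1)) :=
            mul_le_mul_of_nonneg_left hX.le hMn
        _ = x / (x + 1) := by rw [mul_one_div]
        _ < 1 := (div_lt_one (by positivity)).mpr (by linarith)
    have hMN : IsUnit (M * N) := by
      refine step _ ?_
      calc ‖(M * N).map ⇑φ - 1‖ = ‖M.map ⇑φ * (N.map ⇑φ - G)‖ := by
            rw [theta_mul φ, mul_sub, hG1]
        _ ≤ x * ‖N.map ⇑φ - G‖ := norm_mul_le _ _
        _ < 1 := hbound N hNn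
    have hNM : IsUnit (N' * M) := by
      refine step _ ?_
      calc ‖(N' * M).map ⇑φ - 1‖ = ‖(N'.map ⇑φ - G) * (M.map ⇑φ)‖ := by
            rw [theta_mul φ, sub_mul, hG2]
        _ ≤ ‖N'.map ⇑φ - G‖ * x := norm_mul_le _ _
        _ < 1 := by rw [mul_comm]; exact hbound N' hNn'
    refine isUnit_of_left_right (hNM.unit⁻¹.val * N') (N * hMN.unit⁻¹.val) ?_ ?_
    · rw [mul_assoc]
      exact hNM.val_inv_mul
    · rw [← mul_assoc]
      exact hMN.mul_val_inv

include hdense hspec in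
lemma orbit_lift {m : ℕ} (b : Fin m → B) (hb : b ∈ Lg B m) :
    ∃ (a : Fin m → A) (g : Matrix (Fin m) (Fin m) B), a ∈ Lg A m ∧ IsUnit g ∧
      g.mulVec b = fun i => φ (a i) := by
  obtain ⟨y, hy⟩ := hb
  set K := ∑ i, ‖y i‖ with hKdef
  have hK0 : 0 ≤ K := Finset.sum_nonneg fun _ _ => norm_nonneg _
  have hδ : (0 : ℝ) < 1 / (K + 1) := by positivity
  choose af haf using fun i => hdense.exists_dist_lt (b i) hδ
  set v : Fin m → B := fun i => φ (af i) - b i with hvdef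
  have hsum : ‖∑ j, y j * v j‖ < 1 := by
    calc ‖∑ j, y j * v j‖ ≤ ∑ j, ‖y j * v j‖ := norm_sum_le _ _
      _ ≤ ∑ j, ‖y j‖ * (1 / (K + 1)) := by
          refine Finset.sum_le_sum fun j _ => ?_
          refine le_trans (norm_mul_le _ _) (mul_le_mul_of_nonneg_left ?_ (norm_nonneg _))
          rw [hvdef, ← dist_eq_norm, dist_comm]
          exact (haf j).le
      _ = K * (1 / (K + 1)) := by rw [← Finset.sum_mul]
      _ < 1 := by rw [mul_one_div, div_lt_one (by positivity)]; linarith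
  have hs : IsUnit (1 + ∑ j, y j * v j) :=
    isUnit_of_norm_sub_one_lt _ (by rwa [add_sub_cancel_left])
  obtain ⟨g, hg, hgv⟩ := exists_unit_mulVec_eq y b v hy hs
  have hba : g.mulVec b = fun i => φ (af i) := by
    rw [hgv]; funext i; simp [hvdef]
  refine ⟨af, g, ?_, hg, hba⟩
  refine lg_of_phi φ hdense hspec af ?_
  rw [← hba]
  exact lg_mulVec g hg b ⟨y, hy⟩

include hdense hspec in
lemma trans_iff (n : ℕ) :
    (∀ m : ℕ, n ≤ m → ∀ a ∈ Lg A m, ∀ b ∈ Lg A m,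
      ∃ g : Matrix (Fin m) (Fin m) A, IsUnit g ∧ g.mulVec a = b) ↔
    (∀ m : ℕ, n ≤ m → ∀ a ∈ Lg B m, ∀ b ∈ Lg B m,
      ∃ g : Matrix (Fin m) (Fin m) B, IsUnit g ∧ g.mulVec a = b) := by
  constructor
  · intro HA m hm b hb b' hb'
    obtain ⟨a, g1, haLg, hg1, h1⟩ := orbit_lift φ hdense hspec b hb
    obtain ⟨a', g2, ha'Lg, hg2, h2⟩ := orbit_lift φ hdense hspec b' hb'
    obtain ⟨h, hh, hhv⟩ := HA m hm a haLg a' ha'Lg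
    have hhφ : IsUnit (h.map ⇑φ) := theta_unit φ hh
    refine ⟨hg2.unit⁻¹.val * ((h.map ⇑φ) * g1),
      (hg2.unit⁻¹.isUnit).mul (hhφ.mul hg1), ?_⟩
    rw [← Matrix.mulVec_mulVec, ← Matrix.mulVec_mulVec, h1, map_mulVec φ, hhv, ← h2,
      Matrix.mulVec_mulVec, hg2.val_inv_mul, Matrix.one_mulVec]
  · intro HB m hm a ha a' ha'
    obtain ⟨x', hx'⟩ := ha'
    have haB : (fun i => φ (a i)) ∈ Lg B m := by
      obtain ⟨x, hx⟩ := ha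
      exact ⟨fun i => φ (x i), by
        simp only [← _root_.map_mul, ← _root_.map_sum, hx, _root_.map_one]⟩
    have ha'B : (fun i => φ (a' i)) ∈ Lg B m := by
      exact ⟨fun i => φ (x' i), by
        simp only [← _root_.map_mul, ← _root_.map_sum, hx', _root_.map_one]⟩
    obtain ⟨g, hg, hgv⟩ := HB m hm _ haB _ ha'B
    set Ka := ∑ k, ‖φ (a k)‖ with hKa
    set Kx := ∑ j, ‖φ (x' j)‖ with hKx
    have hKa0 : 0 ≤ Ka := Finset.sum_nonneg fun _ _ => norm_nonneg _
    have hKx0 : 0 ≤ Kx := Finset.sum_nonneg fun _ _ => norm_nonneg _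
    set C := ‖hg.unit⁻¹.val‖ with hC
    have hC0 : 0 ≤ C := norm_nonneg _
    set δ₁ : ℝ := 1 / ((1 + Ka) * (1 + Kx)) with hδ₁
    set δ₂ : ℝ := 1 / ((m + 1) * (1 + C)) with hδ₂
    have hδ₁0 : 0 < δ₁ := by positivity
    have hδ₂0 : 0 < δ₂ := by positivity
    set ε := min δ₁ δ₂ with hε
    have hε0 : 0 < ε := lt_min hδ₁0 hδ₂0
    obtain ⟨H, hHe, hHn⟩ := approx_matrix φ hdense g hε0
    -- IsUnit (H.map φ)
    have hHGnorm : ‖H.map ⇑φ - g‖ * C < 1 := by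
      have h1 : ‖H.map ⇑φ - g‖ < δ₂ * (m + 1) :=
        lt_of_lt_of_le hHn (by
          have := min_le_right δ₁ δ₂
          nlinarith [hε0])
      have h2 : δ₂ * (m + 1) = 1 / (1 + C) := by
        rw [hδ₂]; field_simp
      rw [h2] at h1
      calc ‖H.map ⇑φ - g‖ * C ≤ (1 / (1 + C)) * C := by
            refine mul_le_mul_of_nonneg_right h1.le hC0
        _ = C / (1 + C) := by rw [one_div, inv_mul_eq_div]
        _ < 1 := (div_lt_one (by positivity)).mpr (by linarith)
    have hHφ : IsUnit (H.map ⇑φ) := by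
      have hgu : g * hg.unit⁻¹.val = 1 := hg.mul_val_inv
      have h1 : IsUnit (H.map ⇑φ * hg.unit⁻¹.val) := by
        haveI : @CompleteSpace (Matrix (Fin m) (Fin m) B)
            (@PseudoMetricSpace.toUniformSpace _
              (Matrix.linftyOpNormedRing (n := Fin m) (α := B)).toPseudoMetricSpace) := by
          exact (inferInstance : CompleteSpace (Matrix (Fin m) (Fin m) B))
        refine isUnit_of_norm_sub_one_lt _ ?_
        have he : H.map ⇑φ * hg.unit⁻¹.val - 1 = (H.map ⇑φ - g) * hg.unit⁻¹.val := by
          rw [sub_mul, hgu]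
        rw [he]
        exact lt_of_le_of_lt (norm_mul_le _ _) hHGnorm
      have h2 : H.map ⇑φ = (H.map ⇑φ * hg.unit⁻¹.val) * g := by
        rw [mul_assoc, hg.val_inv_mul, mul_one]
      rw [h2]
      exact h1.mul hg
    have hH : IsUnit H := mat_spec φ hdense hspec m H hHφ
    -- perturbation
    set v : Fin m → A := fun i => H.mulVec a i - a' i with hvdef
    have hφv : ∀ j, φ (v j) = ∑ k, (φ (H j k) - g j k) * φ (a k) := by
      intro j
      have h1 : φ (H.mulVec a j) = ∑ k, φ (H j k) * φ (a k) := by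
        simp [Matrix.mulVec, dotProduct, _root_.map_sum, _root_.map_mul]
      have h2 : φ (a' j) = ∑ k, g j k * φ (a k) := by
        have := congrFun hgv j
        simp only [Matrix.mulVec, dotProduct] at this
        exact this.symm
      rw [hvdef, map_sub, h1, h2, ← Finset.sum_sub_distrib]
      exact Finset.sum_congr rfl fun k _ => by rw [sub_mul]
    have hφvn : ∀ j, ‖φ (v j)‖ ≤ ε * Ka := by
      intro j
      rw [hφv j]
      calc ‖∑ k, (φ (H j k) - g j k) * φ (a k)‖ ≤ ∑ k, ‖(φ (H j k) - g j k) * φ (a k)‖ :=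
            norm_sum_le _ _
        _ ≤ ∑ k, ε * ‖φ (a k)‖ := by
            refine Finset.sum_le_sum fun k _ => ?_
            exact le_trans (norm_mul_le _ _)
              (mul_le_mul_of_nonneg_right (hHe j k).le (norm_nonneg _))
        _ = ε * Ka := by rw [← Finset.mul_sum]
    have hsnorm : ‖φ (1 + ∑ j, x' j * v j) - 1‖ < 1 := by
      have h1 : φ (1 + ∑ j, x' j * v j) - 1 = ∑ j, φ (x' j) * φ (v j) := by
        rw [_root_.map_add, _root_.map_one, add_sub_cancel_left, _root_.map_sum]
        exact Finset.sum_congr rfl fun j _ => _root_.map_mul φ _ _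
      rw [h1]
      calc ‖∑ j, φ (x' j) * φ (v j)‖ ≤ ∑ j, ‖φ (x' j) * φ (v j)‖ := norm_sum_le _ _
        _ ≤ ∑ j, ‖φ (x' j)‖ * (ε * Ka) := by
            refine Finset.sum_le_sum fun j _ => ?_
            exact le_trans (norm_mul_le _ _)
              (mul_le_mul_of_nonneg_left (hφvn j) (norm_nonneg _))
        _ = Kx * (ε * Ka) := by rw [← Finset.sum_mul, ← hKx]
        _ < 1 := by
            have hεδ : ε ≤ δ₁ := min_le_left _ _
            have hle : Kx * (ε * Ka) ≤ Kx * (δ₁ * Ka) :=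
              mul_le_mul_of_nonneg_left (mul_le_mul_of_nonneg_right hεδ hKa0) hKx0
            refine lt_of_le_of_lt hle ?_
            have hrw : Kx * (δ₁ * Ka) = (Kx * Ka) / ((1 + Ka) * (1 + Kx)) := by
              rw [hδ₁]; ring
            rw [hrw, div_lt_one (by positivity)]
            nlinarith
    have hsu : IsUnit (1 + ∑ j, x' j * v j) :=
      (unit_iff φ hspec _).mp (isUnit_of_norm_sub_one_lt _ hsnorm)
    obtain ⟨g₂, hg₂, hg₂v⟩ := exists_unit_mulVec_eq x' a' v hx' hsu
    have hg₂H : g₂.mulVec a' = H.mulVec a := by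
      rw [hg₂v]; funext i; simp [hvdef]
    refine ⟨hg₂.unit⁻¹.val * H, (hg₂.unit⁻¹.isUnit).mul hH, ?_⟩
    rw [← Matrix.mulVec_mulVec, ← hg₂H, Matrix.mulVec_mulVec, hg₂.val_inv_mul,
      Matrix.one_mulVec]

end Main

end GsrAux

/-- If `φ : A → B` is a dense and spectral morphism of unital complex Banach algebras,
then `gsr A = gsr B`. -/
theorem gsr_eq_gsr_of_dense_spectral {A B : Type*}
    [NormedRing A] [NormedAlgebra ℂ A] [CompleteSpace A]
    [NormedRing B] [NormedAlgebra ℂ B] [CompleteSpace B]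
    (φ : A →ₐ[ℂ] B) (hcont : Continuous φ) (hdense : DenseRange φ)
    (hspec : ∀ a : A, spectrum ℂ (φ a) = spectrum ℂ a) :
    gsr A = gsr B := by
  unfold gsr
  congr 1
  ext c
  constructor
  · rintro ⟨n, rfl, h1, h2⟩
    exact ⟨n, rfl, h1, (GsrAux.trans_iff φ hdense hspec n).mp h2⟩
  · rintro ⟨n, rfl, h1, h2⟩
    exact ⟨n, rfl, h1, (GsrAux.trans_iff φ hdense hspec n).mpr h2⟩
end

section
/- (Homotopy invariance of the homotopical stable ranks) Let A and B be unital complex Banach algebras that are homotopy equivalent, i.e. there exist continuous unital algebra morphisms φ : A → B and ψ : B → A such that ψ∘φ is connected to id_A and φ∘ψ is connected to id_B by paths of continuous unital algebra morphisms (continuous in the point-norm sense, jointly continuous in the time and algebra variables). Then csr A = csr B and gsr A = gsr B. -/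
/-- The connected stable rank: the least `n ≥ 1` such that `Lg_m(A)` is connected
for all `m ≥ n`. -/
noncomputable def csr (A : Type*) [Ring A] [TopologicalSpace A] : ℕ∞ :=
  sInf {c : ℕ∞ | ∃ n : ℕ, c = n ∧ 1 ≤ n ∧ ∀ m : ℕ, n ≤ m → IsConnected (Lg A m)}

open Matrix Finset Set

/-- Unimodular tuples are preserved by unital ring homomorphisms, componentwise. -/
lemma lg_map {A B : Type*} [Ring A] [Ring B] {m : ℕ} {F : Type*} [FunLike F A B]
    [RingHomClass F A B] (f : F) {a : Fin m → A} (ha : a ∈ Lg A m) :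
    (fun i => f (a i)) ∈ Lg B m := by
  obtain ⟨x, hx⟩ := ha
  refine ⟨fun i => f (x i), ?_⟩
  calc ∑ i, f (x i) * f (a i) = f (∑ i, x i * a i) := by
        rw [map_sum]; simp [_root_.map_mul]
    _ = 1 := by rw [hx, _root_.map_one]

lemma vecMulVec_mul_vecMulVec {A : Type*} [Ring A] {m : ℕ} (p r s t : Fin m → A) :
    vecMulVec p r * vecMulVec s t
      = vecMulVec (fun i => p i * ∑ j, r j * s j) t := by
  ext i k
  simp [Matrix.mul_apply, Matrix.vecMulVec_apply, Finset.sum_mul, Finset.mul_sum, mul_assoc]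

/-- The algebraic heart: if `a` is unimodular with witness `x` and `1 + ∑ xᵢ(bᵢ - aᵢ)` is a
unit, then an invertible matrix carries `a` to `b`. -/
lemma exists_unit_mulVec {A : Type*} [Ring A] {m : ℕ} (a b x : Fin m → A)
    (hx : ∑ i, x i * a i = 1) (u : Aˣ)
    (hu : (u : A) = 1 + ∑ i, x i * (b i - a i)) :
    ∃ g : Matrix (Fin m) (Fin m) A, IsUnit g ∧ g *ᵥ a = b := by
  set v : Fin m → A := fun i => b i - a i with hv
  set d : A := ∑ i, x i * v i with hd
  set q : Fin m → A := fun j => (↑u⁻¹ : A) * x j with hq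
  set N : Matrix (Fin m) (Fin m) A := vecMulVec v x with hN
  set M : Matrix (Fin m) (Fin m) A := vecMulVec v q with hM
  have hNM : N * M = vecMulVec (fun i => v i * d) q := by
    rw [hN, hM, _root_.vecMulVec_mul_vecMulVec]
  have hqv : ∑ j, q j * v j = (↑u⁻¹ : A) * d := by
    rw [hd, Finset.mul_sum]
    exact Finset.sum_congr rfl fun j _ => by rw [hq, mul_assoc]
  have hMN : M * N = vecMulVec (fun i => v i * ((↑u⁻¹ : A) * d)) x := by
    rw [hM, hN, _root_.vecMulVec_mul_vecMulVec, hqv]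
  have key1 : M + N * M = N := by
    rw [hNM]
    ext i k
    simp only [Matrix.add_apply, Matrix.vecMulVec_apply, hM, hN]
    calc v i * q k + v i * d * q k = v i * ((1 + d) * q k) := by noncomm_ring
      _ = v i * ((u : A) * ((↑u⁻¹ : A) * x k)) := by simp only [← hu, hq]
      _ = v i * x k := by rw [Units.mul_inv_cancel_left]
  have key2 : M + M * N = N := by
    rw [hMN]
    ext i k
    simp only [Matrix.add_apply, Matrix.vecMulVec_apply, hM, hN, hq]
    calc v i * ((↑u⁻¹ : A) * x k) + v i * ((↑u⁻¹ : A) * d) * x k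
        = v i * ((↑u⁻¹ : A) * ((1 + d) * x k)) := by noncomm_ring
      _ = v i * x k := by rw [← hu, Units.inv_mul_cancel_left]
  have h1 : (1 + N) * (1 - M) = 1 := by
    have e : (1 + N) * (1 - M) = 1 + N - (M + N * M) := by noncomm_ring
    rw [e, key1]; abel
  have h2 : (1 - M) * (1 + N) = 1 := by
    have e : (1 - M) * (1 + N) = 1 + N - (M + M * N) := by noncomm_ring
    rw [e, key2]; abel
  refine ⟨1 + N, ⟨⟨1 + N, 1 - M, h1, h2⟩, rfl⟩, ?_⟩
  funext i
  have hNa : (N *ᵥ a) i = v i := by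
    simp only [hN, Matrix.mulVec, dotProduct, Matrix.vecMulVec_apply, mul_assoc,
      ← Finset.mul_sum, hx, mul_one]
  rw [Matrix.add_mulVec, Matrix.one_mulVec, Pi.add_apply, hNa, hv]
  exact add_sub_cancel (a i) (b i)

/-- Every tuple close enough to a unimodular tuple `a` is obtained from `a` by an
invertible matrix. -/
lemma exists_unit_of_near {A : Type*} [NormedRing A] [CompleteSpace A] {m : ℕ}
    {a : Fin m → A} (ha : a ∈ Lg A m) :
    ∃ ε > 0, ∀ b : Fin m → A, dist b a < ε →
      ∃ g : Matrix (Fin m) (Fin m) A, IsUnit g ∧ g *ᵥ a = b := by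
  obtain ⟨x, hx⟩ := ha
  set C : ℝ := ∑ i, ‖x i‖ with hC
  have hC0 : 0 ≤ C := Finset.sum_nonneg fun i _ => norm_nonneg _
  refine ⟨(C + 1)⁻¹, by positivity, fun b hb => ?_⟩
  have hd : ‖∑ i, x i * (b i - a i)‖ < 1 := by
    have e : (C + 1) * (C + 1)⁻¹ = 1 := mul_inv_cancel₀ (by positivity)
    have hi : (0:ℝ) < (C + 1)⁻¹ := by positivity
    have hdn : (0:ℝ) ≤ dist b a := dist_nonneg
    calc ‖∑ i, x i * (b i - a i)‖ ≤ ∑ i, ‖x i * (b i - a i)‖ := norm_sum_le _ _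
      _ ≤ ∑ i, ‖x i‖ * dist b a := by
          refine Finset.sum_le_sum fun i _ => ?_
          refine (norm_mul_le _ _).trans ?_
          exact mul_le_mul_of_nonneg_left
            (by rw [← dist_eq_norm]; exact dist_le_pi_dist b a i) (norm_nonneg _)
      _ = C * dist b a := by rw [← Finset.sum_mul]
      _ < 1 := by nlinarith
  have hd' : ‖-(∑ i, x i * (b i - a i))‖ < 1 := by rwa [norm_neg]
  refine exists_unit_mulVec a b x hx (Units.oneSub _ hd') ?_
  rw [Units.val_oneSub, sub_neg_eq_add]

/-- If two unimodular tuples lie in a common preconnected subset of `Lg A m`, then they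
lie in the same `GL_m(A)`-orbit. -/
lemma exists_unit_of_isPreconnected {A : Type*} [NormedRing A] [CompleteSpace A] {m : ℕ}
    {s : Set (Fin m → A)} (hs : IsPreconnected s) (hsub : s ⊆ Lg A m)
    {a b : Fin m → A} (ha : a ∈ s) (hb : b ∈ s) :
    ∃ g : Matrix (Fin m) (Fin m) A, IsUnit g ∧ g *ᵥ a = b := by
  classical
  choose! ε hε hball using fun c (hc : c ∈ Lg A m) =>
    exists_unit_of_near (A := A) (m := m) (a := c) hc
  set O : Set (Fin m → A) := {c | ∃ g : Matrix (Fin m) (Fin m) A, IsUnit g ∧ g *ᵥ a = c}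
    with hO
  set U : Set (Fin m → A) := ⋃ (c) (_ : c ∈ Lg A m ∩ O), Metric.ball c (ε c) with hUdef
  set V : Set (Fin m → A) := ⋃ (c) (_ : c ∈ Lg A m \ O), Metric.ball c (ε c) with hVdef
  have hU : IsOpen U := isOpen_iUnion fun c => isOpen_iUnion fun _ => Metric.isOpen_ball
  have hV : IsOpen V := isOpen_iUnion fun c => isOpen_iUnion fun _ => Metric.isOpen_ball
  have hcover : s ⊆ U ∪ V := by
    intro c hc
    have hcL := hsub hc
    by_cases h : c ∈ O
    · exact Or.inl (mem_iUnion.2 ⟨c, mem_iUnion.2 ⟨⟨hcL, h⟩, Metric.mem_ball_self (hε c hcL)⟩⟩)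
    · exact Or.inr (mem_iUnion.2 ⟨c, mem_iUnion.2 ⟨⟨hcL, h⟩, Metric.mem_ball_self (hε c hcL)⟩⟩)
  have hkeyU : ∀ c, c ∈ U → c ∈ O := by
    intro c hcU
    obtain ⟨c', hc'⟩ := mem_iUnion.1 hcU
    obtain ⟨⟨hc'L, g0, hg0u, hg0⟩, hcb⟩ := mem_iUnion.1 hc'
    obtain ⟨g1, hg1u, hg1⟩ := hball c' hc'L c (by rwa [Metric.mem_ball] at hcb)
    exact ⟨g1 * g0, hg1u.mul hg0u, by rw [← Matrix.mulVec_mulVec, hg0, hg1]⟩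
  have hkeyV : ∀ c, c ∈ V → c ∉ O := by
    intro c hcV hcO
    obtain ⟨g, hgu, hg⟩ := hcO
    obtain ⟨c', hc'⟩ := mem_iUnion.1 hcV
    obtain ⟨⟨hc'L, hc'O⟩, hcb⟩ := mem_iUnion.1 hc'
    obtain ⟨g1, hg1u, hg1⟩ := hball c' hc'L c (by rwa [Metric.mem_ball] at hcb)
    obtain ⟨u1, hu1⟩ := hg1u
    refine hc'O ⟨Units.val u1⁻¹ * g, (u1⁻¹).isUnit.mul hgu, ?_⟩
    rw [← Matrix.mulVec_mulVec, hg, ← hg1, ← hu1, Matrix.mulVec_mulVec, Units.inv_mul,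
      Matrix.one_mulVec]
  have haO : a ∈ O := ⟨1, isUnit_one, Matrix.one_mulVec a⟩
  have haU : a ∈ U :=
    mem_iUnion.2 ⟨a, mem_iUnion.2 ⟨⟨hsub ha, haO⟩, Metric.mem_ball_self (hε a (hsub ha))⟩⟩
  have hbU : b ∈ U := by
    by_contra hbU
    have hbV : b ∈ V := (hcover hb).resolve_left hbU
    obtain ⟨z, hzs, hzU, hzV⟩ := hs U V hU hV hcover ⟨a, ha, haU⟩ ⟨b, hb, hbV⟩
    exact hkeyV z hzV (hkeyU z hzU)
  exact hkeyU b hbU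

/-- Transfer of connectedness of `Lg` along a homotopy equivalence (one direction). -/
lemma isConnected_Lg_of_isConnected {A B : Type*}
    [NormedRing A] [NormedAlgebra ℂ A] [NormedRing B] [NormedAlgebra ℂ B]
    (φ : A →ₐ[ℂ] B) (ψ : B →ₐ[ℂ] A) (hψ : Continuous ψ)
    (F : unitInterval → (A →ₐ[ℂ] A))
    (hF : Continuous fun p : unitInterval × A => F p.1 p.2)
    (hF₀ : F 0 = ψ.comp φ) (hF₁ : F 1 = AlgHom.id ℂ A)
    {m : ℕ} (hB : IsConnected (Lg B m)) : IsConnected (Lg A m) := by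
  have hΨc : Continuous fun (b : Fin m → B) (i : Fin m) => ψ (b i) :=
    continuous_pi fun i => hψ.comp (continuous_apply i)
  have hT : IsConnected ((fun (b : Fin m → B) (i : Fin m) => ψ (b i)) '' Lg B m) :=
    hB.image _ hΨc.continuousOn
  have hTsub : (fun (b : Fin m → B) (i : Fin m) => ψ (b i)) '' Lg B m ⊆ Lg A m := by
    rintro _ ⟨b, hb, rfl⟩; exact lg_map ψ hb
  obtain ⟨z₀, hz₀⟩ := hT.nonempty
  refine ⟨⟨z₀, hTsub hz₀⟩, isPreconnected_of_forall z₀ ?_⟩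
  intro a ha
  have hpc : Continuous fun (t : unitInterval) (i : Fin m) => F t (a i) :=
    continuous_pi fun i => hF.comp (continuous_id.prodMk continuous_const)
  refine ⟨Set.range (fun (t : unitInterval) (i : Fin m) => F t (a i)) ∪
      (fun (b : Fin m → B) (i : Fin m) => ψ (b i)) '' Lg B m, ?_, Or.inr hz₀, ?_, ?_⟩
  · rintro c (⟨t, rfl⟩ | hc)
    · exact lg_map (F t) ha
    · exact hTsub hc
  · refine Or.inl ⟨1, ?_⟩
    funext i; show F 1 (a i) = a i; rw [hF₁]; rfl
  · refine IsPreconnected.union' ⟨fun i => F 0 (a i), ⟨0, rfl⟩, ?_⟩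
      (isConnected_range hpc).isPreconnected hT.isPreconnected
    refine ⟨fun i => φ (a i), lg_map φ ha, ?_⟩
    funext i; show ψ (φ (a i)) = F 0 (a i); rw [hF₀]; rfl

/-- Transfer of transitivity of the `GL`-action on `Lg` along a homotopy equivalence
(one direction). -/
lemma gsr_step {A B : Type*} [NormedRing A] [NormedAlgebra ℂ A] [CompleteSpace A]
    [NormedRing B] [NormedAlgebra ℂ B]
    (φ : A →ₐ[ℂ] B) (ψ : B →ₐ[ℂ] A)
    (F : unitInterval → (A →ₐ[ℂ] A))
    (hF : Continuous fun p : unitInterval × A => F p.1 p.2)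
    (hF₀ : F 0 = ψ.comp φ) (hF₁ : F 1 = AlgHom.id ℂ A)
    {m : ℕ}
    (hB : ∀ a ∈ Lg B m, ∀ b ∈ Lg B m,
      ∃ g : Matrix (Fin m) (Fin m) B, IsUnit g ∧ g *ᵥ a = b) :
    ∀ a ∈ Lg A m, ∀ b ∈ Lg A m,
      ∃ g : Matrix (Fin m) (Fin m) A, IsUnit g ∧ g *ᵥ a = b := by
  intro a ha b hb
  obtain ⟨h, hhu, hh⟩ := hB _ (lg_map φ ha) _ (lg_map φ hb)
  have hh' : (h.map ψ) *ᵥ (fun i => ψ (φ (a i))) = fun i => ψ (φ (b i)) := by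
    funext i
    have hi := congrFun hh i
    simp only [Matrix.mulVec, dotProduct, Matrix.map_apply] at hi ⊢
    calc ∑ j, ψ (h i j) * ψ (φ (a j)) = ψ (∑ j, h i j * φ (a j)) := by
          rw [map_sum]; simp [_root_.map_mul]
      _ = ψ (φ (b i)) := by rw [hi]
  have hhu' : IsUnit (h.map ψ) := by
    have := hhu.map ((ψ : B →+* A).mapMatrix (m := Fin m))
    simpa [RingHom.mapMatrix_apply] using this
  have conn : ∀ c, c ∈ Lg A m → ∃ g : Matrix (Fin m) (Fin m) A, IsUnit g ∧
      g *ᵥ c = fun i => ψ (φ (c i)) := by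
    intro c hc
    have hpc : Continuous fun (t : unitInterval) (i : Fin m) => F t (c i) :=
      continuous_pi fun i => hF.comp (continuous_id.prodMk continuous_const)
    refine exists_unit_of_isPreconnected
      (s := Set.range fun (t : unitInterval) (i : Fin m) => F t (c i))
      (isConnected_range hpc).isPreconnected ?_ ⟨1, ?_⟩ ⟨0, ?_⟩
    · rintro _ ⟨t, rfl⟩; exact lg_map (F t) hc
    · funext i; show F 1 (c i) = c i; rw [hF₁]; rfl
    · funext i; show F 0 (c i) = ψ (φ (c i)); rw [hF₀]; rfl
  obtain ⟨g1, hg1u, hg1⟩ := conn a ha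
  obtain ⟨g2, hg2u, hg2⟩ := conn b hb
  obtain ⟨u2, hu2⟩ := hg2u
  refine ⟨Units.val u2⁻¹ * (h.map ψ * g1), (u2⁻¹).isUnit.mul (hhu'.mul hg1u), ?_⟩
  rw [← Matrix.mulVec_mulVec, ← Matrix.mulVec_mulVec, hg1, hh', ← hg2, ← hu2,
    Matrix.mulVec_mulVec, Units.inv_mul, Matrix.one_mulVec]

/-- (Homotopy invariance of the homotopical stable ranks) If `A` and `B` are homotopy
equivalent unital complex Banach algebras — via morphisms `φ : A → B` and `ψ : B → A` such that
`ψ ∘ φ` and `φ ∘ ψ` are connected to the respective identities by jointly continuous paths of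
continuous unital algebra morphisms — then `csr A = csr B` and `gsr A = gsr B`. -/
theorem csr_gsr_eq_of_homotopy_equivalent {A B : Type*}
    [NormedRing A] [NormedAlgebra ℂ A] [CompleteSpace A]
    [NormedRing B] [NormedAlgebra ℂ B] [CompleteSpace B]
    (φ : A →ₐ[ℂ] B) (ψ : B →ₐ[ℂ] A) (hφ : Continuous φ) (hψ : Continuous ψ)
    (F : unitInterval → (A →ₐ[ℂ] A))
    (hF : Continuous fun p : unitInterval × A => F p.1 p.2)
    (hF₀ : F 0 = ψ.comp φ) (hF₁ : F 1 = AlgHom.id ℂ A)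
    (G : unitInterval → (B →ₐ[ℂ] B))
    (hG : Continuous fun p : unitInterval × B => G p.1 p.2)
    (hG₀ : G 0 = φ.comp ψ) (hG₁ : G 1 = AlgHom.id ℂ B) :
    csr A = csr B ∧ gsr A = gsr B := by
  constructor
  · unfold csr
    congr 1
    ext c
    simp only [Set.mem_setOf_eq]
    constructor
    · rintro ⟨n, rfl, h1, h2⟩
      exact ⟨n, rfl, h1, fun m hm =>
        isConnected_Lg_of_isConnected ψ φ hφ G hG hG₀ hG₁ (h2 m hm)⟩
    · rintro ⟨n, rfl, h1, h2⟩
      exact ⟨n, rfl, h1, fun m hm =>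
        isConnected_Lg_of_isConnected φ ψ hψ F hF hF₀ hF₁ (h2 m hm)⟩
  · unfold gsr
    congr 1
    ext c
    simp only [Set.mem_setOf_eq]
    constructor
    · rintro ⟨n, rfl, h1, h2⟩
      exact ⟨n, rfl, h1, fun m hm =>
        gsr_step ψ φ G hG hG₀ hG₁ (h2 m hm)⟩
    · rintro ⟨n, rfl, h1, h2⟩
      exact ⟨n, rfl, h1, fun m hm =>
        gsr_step φ ψ F hF hF₀ hF₁ (h2 m hm)⟩
end
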